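/- arXiv:1904.06533 — 5 statements merged into one kernel-verified Lean document; each statement's English description precedes it below -/
import Mathlib

section
/- Let V be an n-dimensional real inner product space. For any α₁, …, α_k ∈ V, k · |α₁ ∧ ⋯ ∧ α_k|² = |Σ_{i=1}^{k} (-1)^{i-1} α_i ⊗ α₁ ∧ ⋯ ∧ \widehat{α_i} ∧ ⋯ ∧ α_k|², where the norms on ⋀^k V and on V ⊗ ⋀^{k-1} V are induced by the inner product via ⟨v₁∧…∧v_k, w₁∧…∧w_k⟩ = det(⟨v_i, w_j⟩) and ⟨v₀⊗ω, w₀⊗η⟩ = ⟨v₀,w₀⟩⟨ω,η⟩, and \widehat{α_i} denotes omission of α_i. -/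
open RealInnerProductSpace

/-- For vectors `α₁, …, α_k` in a real inner product space `V`,
`k |α₁ ∧ ⋯ ∧ α_k|² = |∑ᵢ (-1)^{i-1} αᵢ ⊗ α₁ ∧ ⋯ ∧ α̂ᵢ ∧ ⋯ ∧ α_k|²`,
where the norms on `⋀^k V` and `V ⊗ ⋀^{k-1} V` are the ones induced by the inner
product, i.e. `⟨v₁∧…∧v_k, w₁∧…∧w_k⟩ = det (⟨vᵢ, wⱼ⟩)` and
`⟨v₀ ⊗ ω, w₀ ⊗ η⟩ = ⟨v₀, w₀⟩ ⟨ω, η⟩` (both sides written out in these terms,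
with `(-1)^{i-1}` becoming `(-1)^{i+j}` for the 0-indexed double sum). -/
theorem wedge_norm_sq_eq_tensor_norm_sq
    {V : Type*} [NormedAddCommGroup V] [InnerProductSpace ℝ V]
    (k : ℕ) (α : Fin (k + 1) → V) :
    ((k : ℝ) + 1) * (Matrix.of fun i j => (⟪α i, α j⟫ : ℝ)).det =
      ∑ i : Fin (k + 1), ∑ j : Fin (k + 1),
        (-1 : ℝ) ^ ((i : ℕ) + (j : ℕ)) * ⟪α i, α j⟫ *
          (Matrix.of fun a b : Fin k => (⟪α (i.succAbove a), α (j.succAbove b)⟫ : ℝ)).det := by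
  have h : ∀ i : Fin (k + 1),
      (Matrix.of fun i j => (⟪α i, α j⟫ : ℝ)).det =
        ∑ j : Fin (k + 1),
          (-1 : ℝ) ^ ((i : ℕ) + (j : ℕ)) * ⟪α i, α j⟫ *
            (Matrix.of fun a b : Fin k => (⟪α (i.succAbove a), α (j.succAbove b)⟫ : ℝ)).det := by
    intro i
    simpa [Matrix.submatrix] using
      Matrix.det_succ_row (Matrix.of fun i j => (⟪α i, α j⟫ : ℝ)) i
  calc ((k : ℝ) + 1) * (Matrix.of fun i j => (⟪α i, α j⟫ : ℝ)).det
      = ∑ _i : Fin (k + 1), (Matrix.of fun i j => (⟪α i, α j⟫ : ℝ)).det := by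
        simp [Finset.sum_const, mul_comm, Nat.cast_add]
    _ = _ := Finset.sum_congr rfl fun i _ => h i
end

section
/- Let V be an n-dimensional real inner product space with orthonormal basis e₁,…,e_n, let 0 ≤ k ≤ n, and define Q₁ : ⋀^{k+1} V → V ⊗ ⋀^k V by Q₁(ζ) = (1/(k+1))^{1/2} Σ_{i=1}^{n} e_i ⊗ ι(e_i)ζ and Q₂ : ⋀^{k-1} V → V ⊗ ⋀^k V by Q₂(η) = (1/(n-k+1))^{1/2} Σ_{i=1}^{n} e_i ⊗ (e_i ∧ η). Then Q₁ and Q₂ are norm-preserving linear maps and their images are orthogonal subspaces of V ⊗ ⋀^k V. -/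
open RealInnerProductSpace

private lemma ext_of_span' {W : Type*} [NormedAddCommGroup W] [InnerProductSpace ℝ W]
    {S : Set W} (hS : Submodule.span ℝ S = ⊤) {x y : W}
    (h : ∀ s ∈ S, (⟪x, s⟫ : ℝ) = ⟪y, s⟫) : x = y := by
  have hz : ∀ z, z ∈ Submodule.span ℝ S → (⟪x - y, z⟫ : ℝ) = 0 := by
    intro z hzmem
    induction hzmem using Submodule.span_induction with
    | mem s hs => rw [inner_sub_left, h s hs, sub_self]
    | zero => simp
    | add a b _ _ ha hb => rw [inner_add_right, ha, hb, add_zero]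
    | smul c a _ ha => rw [real_inner_smul_right, ha, mul_zero]
  have h0 : (⟪x - y, x - y⟫ : ℝ) = 0 := hz _ (by rw [hS]; trivial)
  exact sub_eq_zero.mp (inner_self_eq_zero.mp h0)

private lemma norm_sqrt_smul_eq' {W W' : Type*} [NormedAddCommGroup W] [InnerProductSpace ℝ W]
    [NormedAddCommGroup W'] [InnerProductSpace ℝ W'] {c : ℝ} (hc : 0 < c) {x : W} {y : W'}
    (h : (⟪x, x⟫ : ℝ) = c * ⟪y, y⟫) : ‖Real.sqrt (1 / c) • x‖ = ‖y‖ := by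
  rw [← Real.sqrt_sq (norm_nonneg (Real.sqrt (1 / c) • x)), ← Real.sqrt_sq (norm_nonneg y)]
  congr 1
  rw [norm_smul, mul_pow, Real.norm_eq_abs, sq_abs, Real.sq_sqrt (by positivity),
    ← real_inner_self_eq_norm_sq, ← real_inner_self_eq_norm_sq, h]
  field_simp

private lemma parseval' {V : Type*} [NormedAddCommGroup V] [InnerProductSpace ℝ V] {n : ℕ}
    (e : Module.Basis (Fin n) ℝ V) (he : Orthonormal ℝ e) (x y : V) :
    ∑ i, (⟪x, e i⟫ : ℝ) * ⟪y, e i⟫ = ⟪x, y⟫ := by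
  rw [← (e.toOrthonormalBasis he).sum_inner_mul_inner x y]
  refine Finset.sum_congr rfl fun i _ => ?_
  simp only [Module.Basis.coe_toOrthonormalBasis]
  rw [real_inner_comm y (e i)]

private lemma bilin_ext₂ {W₁ W₂ : Type*} [AddCommGroup W₁] [Module ℝ W₁]
    [AddCommGroup W₂] [Module ℝ W₂]
    {S₁ : Set W₁} {S₂ : Set W₂} (h₁ : Submodule.span ℝ S₁ = ⊤) (h₂ : Submodule.span ℝ S₂ = ⊤)
    (f : W₁ → W₂ → ℝ)
    (fa₁ : ∀ (x x' : W₁) (y : W₂), f (x + x') y = f x y + f x' y)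
    (fs₁ : ∀ (c : ℝ) (x : W₁) (y : W₂), f (c • x) y = c • f x y)
    (fa₂ : ∀ (x : W₁) (y y' : W₂), f x (y + y') = f x y + f x y')
    (fs₂ : ∀ (c : ℝ) (x : W₁) (y : W₂), f x (c • y) = c • f x y)
    (g : W₁ → W₂ → ℝ)
    (ga₁ : ∀ (x x' : W₁) (y : W₂), g (x + x') y = g x y + g x' y)
    (gs₁ : ∀ (c : ℝ) (x : W₁) (y : W₂), g (c • x) y = c • g x y)
    (ga₂ : ∀ (x : W₁) (y y' : W₂), g x (y + y') = g x y + g x y')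
    (gs₂ : ∀ (c : ℝ) (x : W₁) (y : W₂), g x (c • y) = c • g x y)
    (h : ∀ x ∈ S₁, ∀ y ∈ S₂, f x y = g x y) : ∀ x y, f x y = g x y := by
  have hBC : LinearMap.mk₂ ℝ f fa₁ fs₁ fa₂ fs₂ = LinearMap.mk₂ ℝ g ga₁ gs₁ ga₂ gs₂ := by
    apply LinearMap.ext_on h₁
    intro a ha
    apply LinearMap.ext_on h₂
    intro b hb
    simpa only [LinearMap.mk₂_apply] using h a ha b hb
  intro x y
  simpa only [LinearMap.mk₂_apply] using
    LinearMap.congr_fun (LinearMap.congr_fun hBC x) y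

private lemma sum_sum_cofactor' {m : ℕ} (G : Matrix (Fin (m + 1)) (Fin (m + 1)) ℝ) :
    ∑ j : Fin (m + 1), ∑ j' : Fin (m + 1),
        (-1 : ℝ) ^ ((j : ℕ) + (j' : ℕ)) * G j j' * (G.submatrix j.succAbove j'.succAbove).det
      = ((m : ℝ) + 1) * G.det := by
  calc ∑ j : Fin (m + 1), ∑ j' : Fin (m + 1),
        (-1 : ℝ) ^ ((j : ℕ) + (j' : ℕ)) * G j j' * (G.submatrix j.succAbove j'.succAbove).det
      = ∑ _j : Fin (m + 1), G.det :=
        Finset.sum_congr rfl fun j _ => (Matrix.det_succ_row G j).symm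
    _ = ((m : ℝ) + 1) * G.det := by
        rw [Finset.sum_const, Finset.card_univ, Fintype.card_fin, nsmul_eq_mul]
        push_cast
        ring

private lemma sum_det_gram {V : Type*} [NormedAddCommGroup V] [InnerProductSpace ℝ V] {n m : ℕ}
    (e : Module.Basis (Fin n) ℝ V) (he : Orthonormal ℝ e) (u u' : Fin m → V) :
    ∑ i : Fin n, ((Matrix.of fun a b =>
        (⟪(Fin.cons (e i) u : Fin (m + 1) → V) a, (Fin.cons (e i) u' : Fin (m + 1) → V) b⟫ : ℝ)) :
        Matrix (Fin (m + 1)) (Fin (m + 1)) ℝ).det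
      = ((n : ℝ) - m) * ((Matrix.of fun a b => (⟪u a, u' b⟫ : ℝ)) : Matrix (Fin m) (Fin m) ℝ).det := by
  have hee : ∀ i j, (⟪e i, e j⟫ : ℝ) = if i = j then 1 else 0 := orthonormal_iff_ite.mp he
  rcases m with _ | m
  · simp [Matrix.det_fin_one, Matrix.det_fin_zero, hee, he.1]
  · set G : Matrix (Fin (m + 1)) (Fin (m + 1)) ℝ := Matrix.of fun a b => (⟪u a, u' b⟫ : ℝ)
      with hG
    have stepA : ∀ i, ((Matrix.of fun a b =>
          (⟪(Fin.cons (e i) u : Fin (m + 2) → V) a, (Fin.cons (e i) u' : Fin (m + 2) → V) b⟫ : ℝ)) :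
          Matrix (Fin (m + 2)) (Fin (m + 2)) ℝ).det
        = G.det + ∑ l : Fin (m + 1), ∑ j : Fin (m + 1),
            (-1 : ℝ) ^ ((l : ℕ) + 1 + (j : ℕ)) * ⟪e i, u' l⟫ * ⟪u j, e i⟫
            * (G.submatrix j.succAbove l.succAbove).det := by
      intro i
      set M : Matrix (Fin (m + 2)) (Fin (m + 2)) ℝ :=
        Matrix.of fun a b =>
          (⟪(Fin.cons (e i) u : Fin (m + 2) → V) a, (Fin.cons (e i) u' : Fin (m + 2) → V) b⟫ : ℝ)
        with hM
      rw [Matrix.det_succ_row_zero, Fin.sum_univ_succ]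
      congr 1
      · have h1 : M.submatrix Fin.succ Fin.succ = G := by
          ext a b; simp [hM, hG, Fin.cons_succ]
        rw [Fin.succAbove_zero, h1]
        simp [hM, hee, he.1]
      · refine Finset.sum_congr rfl fun l _ => ?_
        set N : Matrix (Fin (m + 1)) (Fin (m + 1)) ℝ := M.submatrix Fin.succ (l.succ.succAbove)
          with hN
        have hdetN : N.det = ∑ j : Fin (m + 1), (-1 : ℝ) ^ (j : ℕ) * ⟪u j, e i⟫
            * (G.submatrix j.succAbove l.succAbove).det := by
          rw [Matrix.det_succ_column_zero]
          refine Finset.sum_congr rfl fun j _ => ?_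
          have h2 : N.submatrix j.succAbove Fin.succ = G.submatrix j.succAbove l.succAbove := by
            ext a b
            simp [hN, hM, hG, Fin.succ_succAbove_succ, Fin.cons_succ]
          have h3 : N j 0 = (⟪u j, e i⟫ : ℝ) := by
            simp [hN, hM, Fin.succ_succAbove_zero, Fin.cons_succ, Fin.cons_zero]
          rw [h2, h3]
        rw [hdetN, Finset.mul_sum]
        refine Finset.sum_congr rfl fun j _ => ?_
        have h4 : M 0 l.succ = (⟪e i, u' l⟫ : ℝ) := by simp [hM]
        rw [h4, Fin.val_succ]
        ring
    calc ∑ i : Fin n, ((Matrix.of fun a b =>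
          (⟪(Fin.cons (e i) u : Fin (m + 2) → V) a, (Fin.cons (e i) u' : Fin (m + 2) → V) b⟫ : ℝ)) :
          Matrix (Fin (m + 2)) (Fin (m + 2)) ℝ).det
        = ∑ i : Fin n, (G.det + ∑ l : Fin (m + 1), ∑ j : Fin (m + 1),
            (-1 : ℝ) ^ ((l : ℕ) + 1 + (j : ℕ)) * ⟪e i, u' l⟫
            * ⟪u j, e i⟫ * (G.submatrix j.succAbove l.succAbove).det) :=
          Finset.sum_congr rfl fun i _ => stepA i
      _ = (n : ℝ) * G.det + ∑ l : Fin (m + 1), ∑ j : Fin (m + 1), (-1 : ℝ) ^ ((l : ℕ) + 1 + (j : ℕ))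
            * (∑ i, (⟪u' l, e i⟫ : ℝ) * ⟪u j, e i⟫) * (G.submatrix j.succAbove l.succAbove).det := by
          rw [Finset.sum_add_distrib, Finset.sum_const, Finset.card_univ, Fintype.card_fin,
            nsmul_eq_mul]
          congr 1
          rw [Finset.sum_comm]
          refine Finset.sum_congr rfl fun l _ => ?_
          rw [Finset.sum_comm]
          refine Finset.sum_congr rfl fun j _ => ?_
          rw [Finset.mul_sum, Finset.sum_mul]
          refine Finset.sum_congr rfl fun i _ => ?_
          rw [real_inner_comm (u' l) (e i)]
          ring
      _ = (n : ℝ) * G.det - ∑ j : Fin (m + 1), ∑ l : Fin (m + 1),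
            (-1 : ℝ) ^ ((j : ℕ) + (l : ℕ)) * G j l
            * (G.submatrix j.succAbove l.succAbove).det := by
          rw [Finset.sum_comm, sub_eq_add_neg, ← Finset.sum_neg_distrib]
          congr 1
          refine Finset.sum_congr rfl fun j _ => ?_
          rw [← Finset.sum_neg_distrib]
          refine Finset.sum_congr rfl fun l _ => ?_
          rw [parseval' e he (u' l) (u j)]
          have hGjl : G j l = (⟪u j, u' l⟫ : ℝ) := rfl
          rw [hGjl, real_inner_comm (u' l) (u j)]
          ring
      _ = (n : ℝ) * G.det - ∑ _j : Fin (m + 1), G.det := by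
          congr 1
          exact Finset.sum_congr rfl fun j _ => (Matrix.det_succ_row G j).symm
      _ = ((n : ℝ) - ((m + 1 : ℕ) : ℝ)) * G.det := by
          rw [Finset.sum_const, Finset.card_univ, Fintype.card_fin, nsmul_eq_mul]
          push_cast
          ring

/-- Let `V` be an `n`-dimensional real inner product space with orthonormal basis
`e₁, …, e_n`, and `0 ≤ k ≤ n`.  The exterior powers `⋀^k V`, `⋀^{k+1} V`,
`⋀^{k-1} V` and the tensor product `V ⊗ ⋀^k V` are axiomatised by inner product
spaces spanned by decomposables with the induced inner products
(Gram determinants, resp. `⟨v ⊗ ω, w ⊗ η⟩ = ⟨v, w⟩ ⟨ω, η⟩`); `iota` is interior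
multiplication (the adjoint of wedging) and `wedge'` is wedging by a vector.
Then `Q₁(ζ) = (1/(k+1))^{1/2} ∑ᵢ eᵢ ⊗ ι(eᵢ)ζ` and
`Q₂(η) = (1/(n-k+1))^{1/2} ∑ᵢ eᵢ ⊗ (eᵢ ∧ η)` are norm-preserving (linear) maps
with orthogonal images. -/
theorem Q1_Q2_isometric_orthogonal
    {V : Type*} [NormedAddCommGroup V] [InnerProductSpace ℝ V]
    (n k : ℕ) (hV : Module.finrank ℝ V = n) (hk : k ≤ n)
    -- `⋀^k V`
    (Wk : Type*) [NormedAddCommGroup Wk] [InnerProductSpace ℝ Wk]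
    (wk : (Fin k → V) → Wk)
    (hwk_span : Submodule.span ℝ (Set.range wk) = ⊤)
    (hwk_inner : ∀ u v : Fin k → V,
      (⟪wk u, wk v⟫ : ℝ) = (Matrix.of fun i j => (⟪u i, v j⟫ : ℝ)).det)
    -- `⋀^{k+1} V`
    (Wup : Type*) [NormedAddCommGroup Wup] [InnerProductSpace ℝ Wup]
    (wup : (Fin (k + 1) → V) → Wup)
    (hwup_span : Submodule.span ℝ (Set.range wup) = ⊤)
    (hwup_inner : ∀ u v : Fin (k + 1) → V,
      (⟪wup u, wup v⟫ : ℝ) = (Matrix.of fun i j => (⟪u i, v j⟫ : ℝ)).det)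
    -- `⋀^{k-1} V`
    (Wdn : Type*) [NormedAddCommGroup Wdn] [InnerProductSpace ℝ Wdn]
    (wdn : (Fin (k - 1) → V) → Wdn)
    (hwdn_span : Submodule.span ℝ (Set.range wdn) = ⊤)
    (hwdn_inner : ∀ u v : Fin (k - 1) → V,
      (⟪wdn u, wdn v⟫ : ℝ) = (Matrix.of fun i j => (⟪u i, v j⟫ : ℝ)).det)
    -- `V ⊗ ⋀^k V`
    (WT : Type*) [NormedAddCommGroup WT] [InnerProductSpace ℝ WT]
    (tens : V →ₗ[ℝ] Wk →ₗ[ℝ] WT)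
    (htens_span : Submodule.span ℝ {x : WT | ∃ (v : V) (ω : Wk), tens v ω = x} = ⊤)
    (htens_inner : ∀ (v w : V) (ω η : Wk),
      (⟪tens v ω, tens w η⟫ : ℝ) = ⟪v, w⟫ * ⟪ω, η⟫)
    -- wedging `⋀^k V → ⋀^{k+1} V` and its adjoint, interior multiplication
    (lwedge : V →ₗ[ℝ] Wk →ₗ[ℝ] Wup)
    (hlwedge : ∀ (v : V) (u : Fin k → V), lwedge v (wk u) = wup (Fin.cons v u))
    (iota : V →ₗ[ℝ] Wup →ₗ[ℝ] Wk)
    (hiota : ∀ (v : V) (ζ : Wup) (ω : Wk), (⟪iota v ζ, ω⟫ : ℝ) = ⟪ζ, lwedge v ω⟫)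
    -- wedging `⋀^{k-1} V → ⋀^k V` (for `k ≥ 1`)
    (wedge' : V →ₗ[ℝ] Wdn →ₗ[ℝ] Wk)
    (hwedge' : ∀ (v : V) (u : Fin (k - 1) → V) (h : k - 1 + 1 = k),
      wedge' v (wdn u) = wk (Fin.cons v u ∘ Fin.cast h.symm))
    -- an orthonormal basis of `V`
    (e : Module.Basis (Fin n) ℝ V) (he : Orthonormal ℝ e) :
    (∀ ζ : Wup,
      ‖Real.sqrt (1 / ((k : ℝ) + 1)) • ∑ i, tens (e i) (iota (e i) ζ)‖ = ‖ζ‖) ∧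
    (k ≠ 0 → ∀ η : Wdn,
      ‖Real.sqrt (1 / ((n : ℝ) - k + 1)) • ∑ i, tens (e i) (wedge' (e i) η)‖ = ‖η‖) ∧
    (k ≠ 0 → ∀ (ζ : Wup) (η : Wdn),
      (⟪Real.sqrt (1 / ((k : ℝ) + 1)) • ∑ i, tens (e i) (iota (e i) ζ),
        Real.sqrt (1 / ((n : ℝ) - k + 1)) • ∑ i, tens (e i) (wedge' (e i) η)⟫ : ℝ) = 0) := by
  -- inner products of sums of elementary tensors along the orthonormal basis
  have tens_sum : ∀ f g : Fin n → Wk,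
      (⟪∑ i, tens (e i) (f i), ∑ i, tens (e i) (g i)⟫ : ℝ) = ∑ i, (⟪f i, g i⟫ : ℝ) := by
    intro f g
    rw [sum_inner]
    refine Finset.sum_congr rfl fun i _ => ?_
    rw [inner_sum]
    have h1 : ∀ j, (⟪tens (e i) (f i), tens (e j) (g j)⟫ : ℝ)
        = if i = j then (⟪f i, g j⟫ : ℝ) else 0 := by
      intro j
      rw [htens_inner, orthonormal_iff_ite.mp he i j]
      split <;> simp
    simp only [h1]
    simp
  -- explicit formula for interior multiplication on decomposables
  have hiota_exp : ∀ (v : V) (u : Fin (k + 1) → V),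
      iota v (wup u)
        = ∑ j : Fin (k + 1), ((-1 : ℝ) ^ (j : ℕ) * ⟪u j, v⟫) • wk (u ∘ j.succAbove) := by
    intro v u
    refine ext_of_span' hwk_span ?_
    rintro _ ⟨w, rfl⟩
    rw [hiota, hlwedge, hwup_inner, sum_inner, Matrix.det_succ_column_zero]
    refine Finset.sum_congr rfl fun j _ => ?_
    rw [real_inner_smul_left, hwk_inner]
    have h1 : ((Matrix.of fun a b => (⟪u a, (Fin.cons v w : Fin (k + 1) → V) b⟫ : ℝ)) :
        Matrix (Fin (k + 1)) (Fin (k + 1)) ℝ) j 0 = (⟪u j, v⟫ : ℝ) := by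
      simp
    have h2 : (((Matrix.of fun a b => (⟪u a, (Fin.cons v w : Fin (k + 1) → V) b⟫ : ℝ)) :
          Matrix (Fin (k + 1)) (Fin (k + 1)) ℝ).submatrix j.succAbove Fin.succ)
        = Matrix.of fun a b => (⟪(u ∘ j.succAbove) a, w b⟫ : ℝ) := by
      ext a b; simp [Fin.cons_succ]
    rw [h1, h2]
  -- key identity for `Q₁`
  have key1 : ∀ ζ ζ' : Wup,
      (∑ i, (⟪iota (e i) ζ, iota (e i) ζ'⟫ : ℝ)) = ((k : ℝ) + 1) * ⟪ζ, ζ'⟫ := by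
    refine bilin_ext₂ hwup_span hwup_span
      (fun ζ ζ' => ∑ i, (⟪iota (e i) ζ, iota (e i) ζ'⟫ : ℝ))
      (by intros; simp [map_add, inner_add_left, Finset.sum_add_distrib])
      (by intros; simp [map_smul, real_inner_smul_left, Finset.mul_sum, smul_eq_mul])
      (by intros; simp [map_add, inner_add_right, Finset.sum_add_distrib])
      (by intros; simp [map_smul, real_inner_smul_right, Finset.mul_sum, smul_eq_mul])
      (fun ζ ζ' => ((k : ℝ) + 1) * ⟪ζ, ζ'⟫)
      (by intros; simp [inner_add_left]; ring)
      (by intros; simp [real_inner_smul_left, smul_eq_mul]; ring)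
      (by intros; simp [inner_add_right]; ring)
      (by intros; simp [real_inner_smul_right, smul_eq_mul]; ring) ?_
    rintro _ ⟨u, rfl⟩ _ ⟨u', rfl⟩
    show (∑ i, (⟪iota (e i) (wup u), iota (e i) (wup u')⟫ : ℝ))
      = ((k : ℝ) + 1) * ⟪wup u, wup u'⟫
    rw [hwup_inner]
    set G : Matrix (Fin (k + 1)) (Fin (k + 1)) ℝ := Matrix.of fun a b => (⟪u a, u' b⟫ : ℝ)
      with hG
    calc ∑ i, (⟪iota (e i) (wup u), iota (e i) (wup u')⟫ : ℝ)
        = ∑ i : Fin n, ∑ j : Fin (k + 1), ∑ j' : Fin (k + 1),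
            ((-1 : ℝ) ^ (j : ℕ) * ⟪u j, e i⟫) * (((-1 : ℝ) ^ (j' : ℕ) * ⟪u' j', e i⟫)
              * (G.submatrix j.succAbove j'.succAbove).det) := by
          refine Finset.sum_congr rfl fun i _ => ?_
          rw [hiota_exp (e i) u, hiota_exp (e i) u', sum_inner]
          refine Finset.sum_congr rfl fun j _ => ?_
          rw [real_inner_smul_left, inner_sum, Finset.mul_sum]
          refine Finset.sum_congr rfl fun j' _ => ?_
          rw [real_inner_smul_right, hwk_inner]
          have hsub : (Matrix.of fun a b =>
              (⟪(u ∘ j.succAbove) a, (u' ∘ j'.succAbove) b⟫ : ℝ))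
              = G.submatrix j.succAbove j'.succAbove := by
            ext a b; simp [hG]
          rw [hsub]
      _ = ∑ j : Fin (k + 1), ∑ j' : Fin (k + 1),
            (-1 : ℝ) ^ ((j : ℕ) + (j' : ℕ)) * G j j'
              * (G.submatrix j.succAbove j'.succAbove).det := by
          rw [Finset.sum_comm]
          refine Finset.sum_congr rfl fun j _ => ?_
          rw [Finset.sum_comm]
          refine Finset.sum_congr rfl fun j' _ => ?_
          calc ∑ i, ((-1 : ℝ) ^ (j : ℕ) * ⟪u j, e i⟫) * (((-1 : ℝ) ^ (j' : ℕ) * ⟪u' j', e i⟫)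
                * (G.submatrix j.succAbove j'.succAbove).det)
              = ∑ i, (-1 : ℝ) ^ ((j : ℕ) + (j' : ℕ)) * ((⟪u j, e i⟫ : ℝ) * ⟪u' j', e i⟫)
                * (G.submatrix j.succAbove j'.succAbove).det :=
                Finset.sum_congr rfl fun i _ => by ring
            _ = (-1 : ℝ) ^ ((j : ℕ) + (j' : ℕ)) * (∑ i, (⟪u j, e i⟫ : ℝ) * ⟪u' j', e i⟫)
                * (G.submatrix j.succAbove j'.succAbove).det := by
                rw [← Finset.sum_mul, ← Finset.mul_sum]
            _ = (-1 : ℝ) ^ ((j : ℕ) + (j' : ℕ)) * G j j'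
                * (G.submatrix j.succAbove j'.succAbove).det := by
                rw [parseval' e he (u j) (u' j')]
                rfl
      _ = ((k : ℝ) + 1) * G.det := sum_sum_cofactor' G
  refine ⟨?_, ?_, ?_⟩
  · -- `Q₁` is norm-preserving
    intro ζ
    refine norm_sqrt_smul_eq' (by positivity) ?_
    rw [tens_sum, key1]
  · -- `Q₂` is norm-preserving
    intro hk0 η
    obtain ⟨m, rfl⟩ := Nat.exists_eq_succ_of_ne_zero hk0
    have key2 : ∀ η η' : Wdn,
        (∑ i, (⟪wedge' (e i) η, wedge' (e i) η'⟫ : ℝ))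
          = ((n : ℝ) - (↑(m + 1) : ℝ) + 1) * ⟪η, η'⟫ := by
      refine bilin_ext₂ hwdn_span hwdn_span
        (fun η η' => ∑ i, (⟪wedge' (e i) η, wedge' (e i) η'⟫ : ℝ))
        (by intros; simp [map_add, inner_add_left, Finset.sum_add_distrib])
        (by intros; simp [map_smul, real_inner_smul_left, Finset.mul_sum, smul_eq_mul])
        (by intros; simp [map_add, inner_add_right, Finset.sum_add_distrib])
        (by intros; simp [map_smul, real_inner_smul_right, Finset.mul_sum, smul_eq_mul])
        (fun η η' => ((n : ℝ) - (↑(m + 1) : ℝ) + 1) * ⟪η, η'⟫)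
        (by intros; simp [inner_add_left]; ring)
        (by intros; simp [real_inner_smul_left, smul_eq_mul]; ring)
        (by intros; simp [inner_add_right]; ring)
        (by intros; simp [real_inner_smul_right, smul_eq_mul]; ring) ?_
      rintro _ ⟨u, rfl⟩ _ ⟨u', rfl⟩
      show (∑ i, (⟪wedge' (e i) (wdn u), wedge' (e i) (wdn u')⟫ : ℝ))
        = ((n : ℝ) - (↑(m + 1) : ℝ) + 1) * ⟪wdn u, wdn u'⟫
      calc ∑ i, (⟪wedge' (e i) (wdn u), wedge' (e i) (wdn u')⟫ : ℝ)
          = ∑ i : Fin n, ((Matrix.of fun a b =>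
              (⟪(Fin.cons (e i) u : Fin (m + 1) → V) a,
                (Fin.cons (e i) u' : Fin (m + 1) → V) b⟫ : ℝ)) :
              Matrix (Fin (m + 1)) (Fin (m + 1)) ℝ).det := by
            refine Finset.sum_congr rfl fun i _ => ?_
            rw [hwedge' (e i) u rfl, hwedge' (e i) u' rfl]
            have hc1 : (Fin.cons (e i) u ∘ Fin.cast (rfl : m + 1 - 1 + 1 = m + 1).symm)
                = (Fin.cons (e i) u : Fin (m + 1) → V) := rfl
            rw [hc1]
            have hc2 : (Fin.cons (e i) u' ∘ Fin.cast (rfl : m + 1 - 1 + 1 = m + 1).symm)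
                = (Fin.cons (e i) u' : Fin (m + 1) → V) := rfl
            rw [hc2]
            exact hwk_inner _ _
        _ = ((n : ℝ) - (m : ℝ))
              * ((Matrix.of fun a b => (⟪u a, u' b⟫ : ℝ)) : Matrix (Fin m) (Fin m) ℝ).det :=
            sum_det_gram e he u u'
        _ = ((n : ℝ) - (↑(m + 1) : ℝ) + 1) * ⟪wdn u, wdn u'⟫ := by
            rw [hwdn_inner u u']
            have hco : ((n : ℝ) - (m : ℝ)) = ((n : ℝ) - (↑(m + 1) : ℝ) + 1) := by
              push_cast; ring
            rw [hco]
            rfl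
    refine norm_sqrt_smul_eq' ?_ ?_
    · have hmn : ((m : ℝ) + 1) ≤ (n : ℝ) := by exact_mod_cast hk
      push_cast
      linarith
    · rw [tens_sum, key2]
  · -- orthogonality of the images
    intro hk0 ζ η
    obtain ⟨m, rfl⟩ := Nat.exists_eq_succ_of_ne_zero hk0
    have key3 : ∀ (v : V) (η : Wdn), lwedge v (wedge' v η) = 0 := by
      intro v
      have h : (lwedge v).comp (wedge' v) = 0 := by
        apply LinearMap.ext_on hwdn_span
        rintro _ ⟨u, rfl⟩
        simp only [LinearMap.comp_apply, LinearMap.zero_apply]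
        rw [hwedge' v u rfl, hlwedge]
        have hc1 : (Fin.cons v u ∘ Fin.cast (rfl : m + 1 - 1 + 1 = m + 1).symm)
            = (Fin.cons v u : Fin (m + 1) → V) := rfl
        rw [hc1]
        rw [← inner_self_eq_zero (𝕜 := ℝ), hwup_inner]
        refine Matrix.det_zero_of_row_eq (i := 0) (j := 1) ?_ ?_
        · exact zero_ne_one
        · rfl
      intro η
      simpa using LinearMap.congr_fun h η
    rw [real_inner_smul_left, real_inner_smul_right, tens_sum]
    have hzero : ∀ i : Fin n, (⟪iota (e i) ζ, wedge' (e i) η⟫ : ℝ) = 0 := by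
      intro i
      rw [hiota, key3, inner_zero_right]
    rw [Finset.sum_congr rfl fun i _ => hzero i]
    simp
end

section
/- Let V be an n-dimensional real inner product space, 0 ≤ k ≤ n, and define P₁ : V ⊗ ⋀^k V → ⋀^{k+1} V by P₁(α ⊗ ω) = (1/(k+1))^{1/2} α ∧ ω and Q₁ : ⋀^{k+1} V → V ⊗ ⋀^k V by Q₁(ζ) = (1/(k+1))^{1/2} Σᵢ eᵢ ⊗ ι(eᵢ)ζ for an orthonormal basis (eᵢ). Then P₁ ∘ Q₁ = Id on ⋀^{k+1} V, and Q₁ ∘ P₁ is the orthogonal projection of V ⊗ ⋀^k V onto the image of Q₁. -/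
open RealInnerProductSpace

/-- Let `V` be an `n`-dimensional real inner product space, `0 ≤ k ≤ n`.  With
`⋀^k V`, `⋀^{k+1} V` and `V ⊗ ⋀^k V` axiomatised as inner product spaces spanned
by decomposables with the induced inner products, let
`P₁(v ⊗ ω) = (1/(k+1))^{1/2} v ∧ ω` and
`Q₁(ζ) = (1/(k+1))^{1/2} ∑ᵢ eᵢ ⊗ ι(eᵢ)ζ` (for an orthonormal basis `(eᵢ)`, with
`ι` interior multiplication, the adjoint of wedging).  Then `P₁ ∘ Q₁ = Id` on
`⋀^{k+1} V`, and `Q₁ ∘ P₁` is the orthogonal projection of `V ⊗ ⋀^k V` onto the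
image of `Q₁` (i.e. `x - Q₁(P₁ x)` is orthogonal to the image of `Q₁`). -/
theorem P1_comp_Q1_and_orthogonal_projection
    {V : Type*} [NormedAddCommGroup V] [InnerProductSpace ℝ V]
    (n k : ℕ) (hV : Module.finrank ℝ V = n) (hk : k ≤ n)
    -- `⋀^k V`
    (Wk : Type*) [NormedAddCommGroup Wk] [InnerProductSpace ℝ Wk]
    (wk : (Fin k → V) → Wk)
    (hwk_span : Submodule.span ℝ (Set.range wk) = ⊤)
    (hwk_inner : ∀ u v : Fin k → V,
      (⟪wk u, wk v⟫ : ℝ) = (Matrix.of fun i j => (⟪u i, v j⟫ : ℝ)).det)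
    -- `⋀^{k+1} V`
    (Wup : Type*) [NormedAddCommGroup Wup] [InnerProductSpace ℝ Wup]
    (wup : (Fin (k + 1) → V) → Wup)
    (hwup_span : Submodule.span ℝ (Set.range wup) = ⊤)
    (hwup_inner : ∀ u v : Fin (k + 1) → V,
      (⟪wup u, wup v⟫ : ℝ) = (Matrix.of fun i j => (⟪u i, v j⟫ : ℝ)).det)
    -- `V ⊗ ⋀^k V`
    (WT : Type*) [NormedAddCommGroup WT] [InnerProductSpace ℝ WT]
    (tens : V →ₗ[ℝ] Wk →ₗ[ℝ] WT)
    (htens_span : Submodule.span ℝ {x : WT | ∃ (v : V) (ω : Wk), tens v ω = x} = ⊤)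
    (htens_inner : ∀ (v w : V) (ω η : Wk),
      (⟪tens v ω, tens w η⟫ : ℝ) = ⟪v, w⟫ * ⟪ω, η⟫)
    -- wedging and its adjoint, interior multiplication
    (lwedge : V →ₗ[ℝ] Wk →ₗ[ℝ] Wup)
    (hlwedge : ∀ (v : V) (u : Fin k → V), lwedge v (wk u) = wup (Fin.cons v u))
    (iota : V →ₗ[ℝ] Wup →ₗ[ℝ] Wk)
    (hiota : ∀ (v : V) (ζ : Wup) (ω : Wk), (⟪iota v ζ, ω⟫ : ℝ) = ⟪ζ, lwedge v ω⟫)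
    -- `P₁ : V ⊗ ⋀^k V → ⋀^{k+1} V`
    (P1 : WT →ₗ[ℝ] Wup)
    (hP1 : ∀ (v : V) (ω : Wk),
      P1 (tens v ω) = Real.sqrt (1 / ((k : ℝ) + 1)) • lwedge v ω)
    -- an orthonormal basis of `V`
    (e : Module.Basis (Fin n) ℝ V) (he : Orthonormal ℝ e) :
    (∀ ζ : Wup,
      P1 (Real.sqrt (1 / ((k : ℝ) + 1)) • ∑ i, tens (e i) (iota (e i) ζ)) = ζ) ∧
    (∀ (x : WT) (ζ : Wup),
      (⟪x - Real.sqrt (1 / ((k : ℝ) + 1)) • ∑ i, tens (e i) (iota (e i) (P1 x)),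
        Real.sqrt (1 / ((k : ℝ) + 1)) • ∑ i, tens (e i) (iota (e i) ζ)⟫ : ℝ) = 0) := by

  classical
  set c : ℝ := Real.sqrt (1 / ((k : ℝ) + 1)) with hc
  have hcc : c * c = 1 / ((k : ℝ) + 1) := Real.mul_self_sqrt (by positivity)
  -- definiteness helpers
  have horth_up : ∀ y : Wup, (∀ u, (⟪y, wup u⟫ : ℝ) = 0) → y = 0 := by
    intro y hy
    have h : ∀ z : Wup, (⟪y, z⟫ : ℝ) = 0 := by
      intro z
      have hz : z ∈ Submodule.span ℝ (Set.range wup) := by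
        rw [hwup_span]; trivial
      induction hz using Submodule.span_induction with
      | mem z hz => obtain ⟨u, rfl⟩ := hz; exact hy u
      | zero => simp
      | add a b _ _ ha hb => rw [inner_add_right, ha, hb, add_zero]
      | smul r a _ ha => rw [real_inner_smul_right, ha, mul_zero]
    exact inner_self_eq_zero.mp (h y)
  have horth_k : ∀ y : Wk, (∀ u, (⟪y, wk u⟫ : ℝ) = 0) → y = 0 := by
    intro y hy
    have h : ∀ z : Wk, (⟪y, z⟫ : ℝ) = 0 := by
      intro z
      have hz : z ∈ Submodule.span ℝ (Set.range wk) := by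
        rw [hwk_span]; trivial
      induction hz using Submodule.span_induction with
      | mem z hz => obtain ⟨u, rfl⟩ := hz; exact hy u
      | zero => simp
      | add a b _ _ ha hb => rw [inner_add_right, ha, hb, add_zero]
      | smul r a _ ha => rw [real_inner_smul_right, ha, mul_zero]
    exact inner_self_eq_zero.mp (h y)
  have heq_k : ∀ y z : Wk, (∀ u, (⟪y, wk u⟫ : ℝ) = ⟪z, wk u⟫) → y = z := by
    intro y z h
    have := horth_k (y - z) (fun u => by rw [inner_sub_left, h u, sub_self])
    exact sub_eq_zero.mp this
  have heq_up : ∀ y z : Wup, (∀ u, (⟪y, wup u⟫ : ℝ) = ⟪z, wup u⟫) → y = z := by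
    intro y z h
    have := horth_up (y - z) (fun u => by rw [inner_sub_left, h u, sub_self])
    exact sub_eq_zero.mp this
  -- explicit formula for interior multiplication on decomposables
  have hiota_formula : ∀ (v : V) (u : Fin (k + 1) → V),
      iota v (wup u)
        = ∑ j : Fin (k + 1), ((-1) ^ (j : ℕ) * (⟪u j, v⟫ : ℝ))
            • wk (fun a => u (j.succAbove a)) := by
    intro v u
    apply heq_k
    intro ω
    rw [hiota v (wup u) (wk ω), hlwedge, hwup_inner]
    rw [Matrix.det_succ_column_zero]
    rw [sum_inner]
    refine Finset.sum_congr rfl fun j _ => ?_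
    rw [real_inner_smul_left, hwk_inner]
    have h0 : (Matrix.of fun i j' => (⟪u i, (Fin.cons v ω : Fin (k + 1) → V) j'⟫ : ℝ)) j 0
        = ⟪u j, v⟫ := by
      simp [Matrix.of_apply]
    have hsub : ((Matrix.of fun i j' =>
            (⟪u i, (Fin.cons v ω : Fin (k + 1) → V) j'⟫ : ℝ)).submatrix
          j.succAbove Fin.succ)
        = Matrix.of fun a b => (⟪u (j.succAbove a), ω b⟫ : ℝ) := by
      ext a b
      simp [Matrix.submatrix_apply, Matrix.of_apply]
    rw [h0, hsub]
  -- behaviour of wup under permutations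
  have hperm : ∀ (u : Fin (k + 1) → V) (σ : Equiv.Perm (Fin (k + 1))),
      wup (u ∘ σ) = ((Equiv.Perm.sign σ : ℤ) : ℝ) • wup u := by
    intro u σ
    apply heq_up
    intro ω
    rw [real_inner_smul_left, hwup_inner, hwup_inner]
    have : (Matrix.of fun i j' => (⟪(u ∘ σ) i, ω j'⟫ : ℝ))
        = (Matrix.of fun i j' => (⟪u i, ω j'⟫ : ℝ)).submatrix σ id := by
      ext i j'
      simp [Matrix.submatrix_apply, Matrix.of_apply]
    rw [this, Matrix.det_permute]
  -- bringing the j-th entry to the front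
  have hfront : ∀ (u : Fin (k + 1) → V) (j : Fin (k + 1)),
      wup (Fin.cons (u j) (fun a => u (j.succAbove a)))
        = ((-1 : ℝ) ^ (j : ℕ)) • wup u := by
    intro u j
    have hfun : Fin.cons (u j) (fun a => u (j.succAbove a))
        = u ∘ ⇑((Fin.cycleRange j)⁻¹ : Equiv.Perm (Fin (k + 1))) := by
      funext a
      refine Fin.cases ?_ (fun a => ?_) a
      · simp [Equiv.Perm.inv_def, Fin.cycleRange_symm_zero]
      · simp [Equiv.Perm.inv_def, Fin.cycleRange_symm_succ]
    rw [hfun, hperm u ((Fin.cycleRange j)⁻¹ : Equiv.Perm (Fin (k + 1)))]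
    congr 1
    rw [Equiv.Perm.sign_inv, Fin.sign_cycleRange]
    push_cast
    ring
  -- the orthonormal basis expansion
  have b := e.toOrthonormalBasis he
  have hb : ∀ i, (e.toOrthonormalBasis he) i = e i := fun i => by
    simp [Module.Basis.coe_toOrthonormalBasis]
  have hsum_repr : ∀ v : V, ∑ i, (⟪v, e i⟫ : ℝ) • e i = v := by
    intro v
    have := (e.toOrthonormalBasis he).sum_repr' v
    simp only [hb] at this
    calc ∑ i, (⟪v, e i⟫ : ℝ) • e i = ∑ i, (⟪e i, v⟫ : ℝ) • e i := by
          refine Finset.sum_congr rfl fun i _ => by rw [real_inner_comm]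
      _ = v := this
  -- the key identity: sum of wedge-contract is (k+1) * id on decomposables
  have hT : ∀ u : Fin (k + 1) → V,
      ∑ i, lwedge (e i) (iota (e i) (wup u)) = ((k : ℝ) + 1) • wup u := by
    intro u
    have step1 : ∀ i, lwedge (e i) (iota (e i) (wup u))
        = ∑ j : Fin (k + 1), ((-1) ^ (j : ℕ) * (⟪u j, e i⟫ : ℝ))
            • wup (Fin.cons (e i) (fun a => u (j.succAbove a))) := by
      intro i
      rw [hiota_formula, map_sum]
      refine Finset.sum_congr rfl fun j _ => ?_
      rw [map_smul, hlwedge]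
    calc ∑ i, lwedge (e i) (iota (e i) (wup u))
        = ∑ i, ∑ j : Fin (k + 1), ((-1) ^ (j : ℕ) * (⟪u j, e i⟫ : ℝ))
            • wup (Fin.cons (e i) (fun a => u (j.succAbove a))) := by
          exact Finset.sum_congr rfl fun i _ => step1 i
      _ = ∑ j : Fin (k + 1), ∑ i, ((-1) ^ (j : ℕ) * (⟪u j, e i⟫ : ℝ))
            • wup (Fin.cons (e i) (fun a => u (j.succAbove a))) := Finset.sum_comm
      _ = ∑ j : Fin (k + 1), ((-1 : ℝ) ^ (j : ℕ))
            • wup (Fin.cons (u j) (fun a => u (j.succAbove a))) := by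
          refine Finset.sum_congr rfl fun j _ => ?_
          have : ∀ i, wup (Fin.cons (e i) (fun a => u (j.succAbove a)))
              = lwedge (e i) (wk (fun a => u (j.succAbove a))) := fun i =>
            (hlwedge _ _).symm
          simp only [this, mul_smul]
          rw [← Finset.smul_sum]
          congr 1
          have : ∑ i, (⟪u j, e i⟫ : ℝ) • lwedge (e i) (wk fun a => u (j.succAbove a))
              = lwedge (∑ i, (⟪u j, e i⟫ : ℝ) • e i) (wk fun a => u (j.succAbove a)) := by
            rw [map_sum, LinearMap.sum_apply]
            refine Finset.sum_congr rfl fun i _ => ?_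
            rw [map_smul]
            rfl
          rw [this, hsum_repr, hlwedge]
      _ = ∑ _j : Fin (k + 1), wup u := by
          refine Finset.sum_congr rfl fun j _ => ?_
          rw [hfront, smul_smul, ← pow_add, ← two_mul, pow_mul]
          norm_num
      _ = ((k : ℝ) + 1) • wup u := by
          rw [Finset.sum_const, Finset.card_univ, Fintype.card_fin]
          rw [← Nat.cast_smul_eq_nsmul ℝ]
          push_cast
          ring_nf
  -- Part 1
  have part1 : ∀ ζ : Wup, P1 (c • ∑ i, tens (e i) (iota (e i) ζ)) = ζ := by
    intro ζ
    have hz : ζ ∈ Submodule.span ℝ (Set.range wup) := by rw [hwup_span]; trivial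
    induction hz using Submodule.span_induction with
    | mem z hz =>
        obtain ⟨u, rfl⟩ := hz
        rw [map_smul, map_sum]
        have : ∀ i ∈ Finset.univ, P1 (tens (e i) (iota (e i) (wup u)))
            = c • lwedge (e i) (iota (e i) (wup u)) := fun i _ => hP1 _ _
        rw [Finset.sum_congr rfl this, ← Finset.smul_sum, hT, smul_smul, smul_smul, hcc]
        have : 1 / ((k : ℝ) + 1) * ((k : ℝ) + 1) = 1 := by
          field_simp
        rw [this, one_smul]
    | zero => simp
    | add a bb _ _ ha hbb =>
        have hsum : ∑ i, tens (e i) (iota (e i) (a + bb))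
            = ∑ i, tens (e i) (iota (e i) a) + ∑ i, tens (e i) (iota (e i) bb) := by
          rw [← Finset.sum_add_distrib]
          exact Finset.sum_congr rfl fun i _ => by rw [map_add, map_add]
        rw [hsum, smul_add, map_add, ha, hbb]
    | smul r a _ ha =>
        have hsum : ∑ i, tens (e i) (iota (e i) (r • a))
            = r • ∑ i, tens (e i) (iota (e i) a) := by
          rw [Finset.smul_sum]
          exact Finset.sum_congr rfl fun i _ => by rw [map_smul, map_smul]
        rw [hsum, smul_comm c r, map_smul, ha]
  -- adjoint property
  have hadj : ∀ (x : WT) (ζ : Wup),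
      (⟪x, c • ∑ i, tens (e i) (iota (e i) ζ)⟫ : ℝ) = ⟪P1 x, ζ⟫ := by
    intro x ζ
    have hx : x ∈ Submodule.span ℝ {x : WT | ∃ (v : V) (ω : Wk), tens v ω = x} := by
      rw [htens_span]; trivial
    induction hx using Submodule.span_induction with
    | mem x hx =>
        obtain ⟨v, ω, rfl⟩ := hx
        rw [real_inner_smul_right, inner_sum, hP1, real_inner_smul_left]
        congr 1
        calc ∑ i, (⟪tens v ω, tens (e i) (iota (e i) ζ)⟫ : ℝ)
            = ∑ i, (⟪v, e i⟫ : ℝ) * ⟪ζ, lwedge (e i) ω⟫ := by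
              refine Finset.sum_congr rfl fun i _ => ?_
              rw [htens_inner]
              congr 1
              rw [real_inner_comm, hiota]
          _ = ⟪ζ, lwedge (∑ i, (⟪v, e i⟫ : ℝ) • e i) ω⟫ := by
              have hl : (lwedge (∑ i, (⟪v, e i⟫ : ℝ) • (e i : V)) : Wk →ₗ[ℝ] Wup) ω
                  = ∑ i, (⟪v, e i⟫ : ℝ) • lwedge (e i) ω := by
                rw [map_sum, LinearMap.sum_apply]
                refine Finset.sum_congr rfl fun i _ => ?_
                rw [map_smul]
                rfl
              rw [hl, inner_sum]
              refine Finset.sum_congr rfl fun i _ => ?_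
              rw [real_inner_smul_right]
          _ = ⟪ζ, lwedge v ω⟫ := by rw [hsum_repr]
          _ = ⟪lwedge v ω, ζ⟫ := real_inner_comm _ _
    | zero => simp
    | add a bb _ _ ha hbb => rw [inner_add_left, ha, hbb, map_add, inner_add_left]
    | smul r a _ ha => rw [real_inner_smul_left, ha, map_smul, real_inner_smul_left]
  refine ⟨part1, fun x ζ => ?_⟩
  rw [inner_sub_left, hadj, hadj, part1 (P1 x), sub_self]
end

section
/- Let (M, g) be a Riemannian manifold, X a vector field, ω a p-form (p ≥ 1), and (e₁,…,e_n) a local orthonormal frame. Then Σ_{i=1}^{n} ι(e_i)(R(X, e_i)ω) = -∇_X(d*ω) + d*(∇_X ω) + Σ_{i,j=1}^{n} ⟨∇_{e_j} X, e_i⟩ ι(e_j)(∇_{e_i} ω), where R(X, e_i)ω = ∇_X ∇_{e_i} ω - ∇_{e_i} ∇_X ω - ∇_{[X, e_i]} ω is the curvature operator acting on forms and d*ω = -Σᵢ ι(e_i)∇_{e_i}ω is the codifferential. -/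
/- An algebraic (Koszul-style) model of a Riemannian manifold: the commutative
`ℝ`-algebra `A` plays the role of the ring of smooth functions, derivations of
`A` play the role of vector fields, `g` is the Riemannian metric, `nab` the
Levi-Civita connection (`A`-linear in the first slot, a derivation in the
second, metric and torsion-free), `e` a (local) orthonormal frame, and
`k`-forms are alternating `A`-multilinear functions
`(Fin k → Derivation ℝ A A) → A`. -/

namespace RiemannModel

variable {A : Type*} [CommRing A] [Algebra ℝ A]

abbrev Forms (A : Type*) [CommRing A] [Algebra ℝ A] (k : ℕ) : Type _ :=
  (Fin k → Derivation ℝ A A) → A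

variable (nab : Derivation ℝ A A → Derivation ℝ A A → Derivation ℝ A A)
variable (g : Derivation ℝ A A → Derivation ℝ A A → A)
variable {n : ℕ} (e : Fin n → Derivation ℝ A A)

/-- covariant derivative of a `k`-form -/
def covD {k : ℕ} (Y : Derivation ℝ A A) (ω : Forms A k) : Forms A k :=
  fun Z => Y (ω Z) - ∑ i, ω (Function.update Z i (nab Y (Z i)))

/-- interior multiplication of a `(k+1)`-form with a vector field -/
def contr {k : ℕ} (X : Derivation ℝ A A) (ω : Forms A (k + 1)) : Forms A k :=
  fun Z => ω (Fin.cons X Z)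

/-- exterior derivative (via the torsion-free connection `nab`) -/
def extd {k : ℕ} (ω : Forms A k) : Forms A (k + 1) :=
  fun Z => ∑ i : Fin (k + 1), (-1 : A) ^ (i : ℕ) * covD nab (Z i) ω (Z ∘ i.succAbove)

/-- codifferential `d*ω = -∑ᵢ ι(eᵢ)∇_{eᵢ}ω` on `(k+1)`-forms -/
def codiffS {k : ℕ} (ω : Forms A (k + 1)) : Forms A k :=
  -(∑ i, contr (e i) (covD nab (e i) ω))

/-- curvature operator on forms -/
def Rform {k : ℕ} (X Y : Derivation ℝ A A) (ω : Forms A k) : Forms A k :=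
  covD nab X (covD nab Y ω) - covD nab Y (covD nab X ω) - covD nab ⁅X, Y⁆ ω

/-- curvature operator on vector fields -/
def Rvec (X Y Z : Derivation ℝ A A) : Derivation ℝ A A :=
  nab X (nab Y Z) - nab Y (nab X Z) - nab ⁅X, Y⁆ Z

/-- the Ricci endomorphism `Ric(X) = ∑ᵢ R(X, eᵢ)eᵢ` -/
def ricci (X : Derivation ℝ A A) : Derivation ℝ A A :=
  ∑ i, Rvec nab X (e i) (e i)

/-- the metric dual `1`-form of a vector field -/
def flat (X : Derivation ℝ A A) : Forms A 1 := fun Z => g X (Z 0)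

/-- wedge product of a `1`-form with a `k`-form -/
def wedge1 {k : ℕ} (α : Forms A 1) (ω : Forms A k) : Forms A (k + 1) :=
  fun Z => ∑ i : Fin (k + 1), (-1 : A) ^ (i : ℕ) * α (fun _ => Z i) * ω (Z ∘ i.succAbove)

/-- gradient -/
def grad (f : A) : Derivation ℝ A A := ∑ i, (e i) f • e i

/-- Laplacian on functions, `Δ f = -tr Hess f` -/
def lapl (f : A) : A := -(∑ i, ((e i) ((e i) f) - (nab (e i) (e i)) f))

/-- musical isomorphism: vector field associated to a `1`-form -/
def sharp (α : Forms A 1) : Derivation ℝ A A := ∑ i, α (fun _ => e i) • e i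

/-- pointwise inner product of `k`-forms -/
noncomputable def finner {k : ℕ} (ω η : Forms A k) : A :=
  algebraMap ℝ A (1 / (Nat.factorial k : ℝ)) *
    ∑ z : Fin k → Fin n, ω (fun a => e (z a)) * η (fun a => e (z a))

/-- auxiliary: `Y♭ ∧ d*η` (zero on `0`-forms, where `d* = 0`) -/
def wedgeCod : ∀ {k : ℕ}, Forms A k → Derivation ℝ A A → Forms A k
  | 0, _, _ => 0
  | _ + 1, η, Y => wedge1 (flat g Y) (codiffS nab e η)

/-- the `T^{k,1}`-component of the covariant derivative of a `k`-form:
`T(η)(Y) = ∇_Y η - (1/(k+1)) ι(Y)(dη) + (1/(n-k+1)) Y♭ ∧ d*η` -/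
noncomputable def Tform {k : ℕ} (η : Forms A k) (Y : Derivation ℝ A A) : Forms A k :=
  covD nab Y η - algebraMap ℝ A (1 / ((k : ℝ) + 1)) • contr Y (extd nab η) +
    algebraMap ℝ A (1 / ((n : ℝ) - k + 1)) • wedgeCod nab g e η Y

/-- Hodge Laplacian `Δ = d d* + d* d` -/
def hodgeLap : ∀ {k : ℕ}, Forms A k → Forms A k
  | 0, ω => codiffS nab e (extd nab ω)
  | _ + 1, ω => codiffS nab e (extd nab ω) + extd nab (codiffS nab e ω)

/-- the Weitzenböck curvature operator `ℛ_k` -/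
def Rcal : ∀ {k : ℕ}, Forms A k → Forms A k
  | 0, _ => 0
  | _ + 1, η =>
    -(∑ i, ∑ j, wedge1 (flat g (e i)) (contr (e j) (Rform nab (e i) (e j) η)))



section AuxLemmas

lemma aux_contr_covD {k : ℕ} (X Y : Derivation ℝ A A) (η : Forms A (k+1)) :
    contr Y (covD nab X η) = covD nab X (contr Y η) - contr (nab X Y) η := by
  funext Z
  simp only [contr, covD, Pi.sub_apply, Fin.sum_univ_succ, Fin.cons_zero, Fin.cons_succ,
    Fin.update_cons_zero, ← Fin.cons_update]
  ring

lemma aux_covD_neg {k : ℕ} (X : Derivation ℝ A A) (η : Forms A k) :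
    covD nab X (-η) = -covD nab X η := by
  funext Z
  simp only [covD, Pi.neg_apply, map_neg, Finset.sum_neg_distrib]
  ring

lemma aux_covD_sum {k : ℕ} {ι : Type*} (s : Finset ι) (X : Derivation ℝ A A)
    (η : ι → Forms A k) :
    covD nab X (∑ i ∈ s, η i) = ∑ i ∈ s, covD nab X (η i) := by
  funext Z
  simp only [covD, Finset.sum_apply, map_sum, Finset.sum_sub_distrib]
  rw [Finset.sum_comm]

lemma aux_contr_sub {k : ℕ} (Y : Derivation ℝ A A) (η η' : Forms A (k+1)) :
    contr Y (η - η') = contr Y η - contr Y η' := rfl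

lemma aux_contr_sum {k : ℕ} {ι : Type*} (s : Finset ι) (Y : Derivation ℝ A A)
    (η : ι → Forms A (k+1)) :
    contr Y (∑ i ∈ s, η i) = ∑ i ∈ s, contr Y (η i) := by
  funext Z; simp [contr, Finset.sum_apply]

lemma aux_contr_smul {k : ℕ} (a : A) (Y : Derivation ℝ A A) (η : Forms A (k+1)) :
    contr Y (a • η) = a • contr Y η := rfl

section
variable {k : ℕ} (ω : Forms A k)
  (hnab_add₁ : ∀ X Y Z : Derivation ℝ A A, nab (X + Y) Z = nab X Z + nab Y Z)
  (hnab_smul₁ : ∀ (a : A) (X Y : Derivation ℝ A A), nab (a • X) Y = a • nab X Y)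
  (hnab_add₂ : ∀ X Y Z : Derivation ℝ A A, nab X (Y + Z) = nab X Y + nab X Z)
  (hnab_leibniz : ∀ (a : A) (X Y : Derivation ℝ A A),
      nab X (a • Y) = X a • Y + a • nab X Y)
  (hω_add : ∀ (Z : Fin k → Derivation ℝ A A) (i : Fin k) (x y : Derivation ℝ A A),
      ω (Function.update Z i (x + y)) =
        ω (Function.update Z i x) + ω (Function.update Z i y))
  (hω_smul : ∀ (Z : Fin k → Derivation ℝ A A) (i : Fin k) (a : A) (x : Derivation ℝ A A),
      ω (Function.update Z i (a • x)) = a * ω (Function.update Z i x))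

include hnab_smul₁ hω_smul in
lemma aux_covD_smul_vec (a : A) (Y : Derivation ℝ A A) :
    covD nab (a • Y) ω = a • covD nab Y ω := by
  funext Z
  simp only [covD, Pi.smul_apply, smul_eq_mul, hnab_smul₁, hω_smul,
    Derivation.coe_smul, Pi.smul_apply, smul_eq_mul]
  rw [mul_sub, Finset.mul_sum]

include hnab_add₁ hω_add in
lemma aux_covD_add_vec (Y Y' : Derivation ℝ A A) :
    covD nab (Y + Y') ω = covD nab Y ω + covD nab Y' ω := by
  funext Z
  simp only [covD, Pi.add_apply, hnab_add₁, hω_add, Derivation.coe_add, Pi.add_apply,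
    Finset.sum_add_distrib]
  ring

include hnab_add₁ hnab_smul₁ hω_add hω_smul in
lemma aux_covD_sum_smul {ι : Type*} (s : Finset ι) (c : ι → A)
    (V : ι → Derivation ℝ A A) :
    covD nab (∑ j ∈ s, c j • V j) ω = ∑ j ∈ s, c j • covD nab (V j) ω := by
  classical
  induction s using Finset.induction_on with
  | empty =>
    simp only [Finset.sum_empty]
    have h0 : (0 : Derivation ℝ A A) = (0 : A) • (0 : Derivation ℝ A A) := by simp
    rw [h0, aux_covD_smul_vec nab ω hnab_smul₁ hω_smul]
    funext Z; simp
  | insert _ _ hx ih =>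
    rw [Finset.sum_insert hx, Finset.sum_insert hx,
      aux_covD_add_vec nab ω hnab_add₁ hω_add,
      aux_covD_smul_vec nab ω hnab_smul₁ hω_smul, ih]

include hnab_leibniz hω_add hω_smul in
lemma aux_covD_slot_smul (Y : Derivation ℝ A A) (Z : Fin k → Derivation ℝ A A)
    (i : Fin k) (a : A) (x : Derivation ℝ A A) :
    covD nab Y ω (Function.update Z i (a • x)) =
      a * covD nab Y ω (Function.update Z i x) := by
  classical
  simp only [covD]
  rw [hω_smul, Derivation.leibniz, smul_eq_mul, smul_eq_mul]
  rw [← Finset.add_sum_erase _ _ (Finset.mem_univ i),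
      ← Finset.add_sum_erase _ _ (Finset.mem_univ i)]
  have h1 : ω (Function.update (Function.update Z i (a • x)) i
        (nab Y (Function.update Z i (a • x) i))) =
      Y a * ω (Function.update Z i x) +
        a * ω (Function.update Z i (nab Y x)) := by
    rw [Function.update_idem, Function.update_self, hnab_leibniz, hω_add, hω_smul, hω_smul]
  have h2 : ∀ l ∈ Finset.univ.erase i,
      ω (Function.update (Function.update Z i (a • x)) l
          (nab Y (Function.update Z i (a • x) l))) =
        a * ω (Function.update (Function.update Z i x) l
          (nab Y (Function.update Z i x l))) := by
    intro l hl
    have hli : l ≠ i := Finset.ne_of_mem_erase hl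
    rw [Function.update_of_ne hli, Function.update_of_ne hli,
      Function.update_comm hli.symm, hω_smul, Function.update_comm hli]
  rw [h1, Finset.sum_congr rfl h2, Function.update_idem, Function.update_self, ← Finset.mul_sum]
  ring

include hnab_add₂ hω_add in
lemma aux_covD_slot_add (Y : Derivation ℝ A A) (Z : Fin k → Derivation ℝ A A)
    (i : Fin k) (x y : Derivation ℝ A A) :
    covD nab Y ω (Function.update Z i (x + y)) =
      covD nab Y ω (Function.update Z i x) + covD nab Y ω (Function.update Z i y) := by
  classical
  simp only [covD]
  rw [hω_add, map_add]
  rw [← Finset.add_sum_erase _ _ (Finset.mem_univ i),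
      ← Finset.add_sum_erase _ _ (Finset.mem_univ i),
      ← Finset.add_sum_erase _ _ (Finset.mem_univ i)]
  have h1 : ω (Function.update (Function.update Z i (x + y)) i
        (nab Y (Function.update Z i (x + y) i))) =
      ω (Function.update Z i (nab Y x)) + ω (Function.update Z i (nab Y y)) := by
    rw [Function.update_idem, Function.update_self, hnab_add₂, hω_add]
  have h2 : ∀ l ∈ Finset.univ.erase i,
      ω (Function.update (Function.update Z i (x + y)) l
          (nab Y (Function.update Z i (x + y) l))) =
        ω (Function.update (Function.update Z i x) l
            (nab Y (Function.update Z i x l))) +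
        ω (Function.update (Function.update Z i y) l
            (nab Y (Function.update Z i y l))) := by
    intro l hl
    have hli : l ≠ i := Finset.ne_of_mem_erase hl
    rw [Function.update_of_ne hli, Function.update_of_ne hli, Function.update_of_ne hli,
      Function.update_comm hli.symm, hω_add, Function.update_comm hli, Function.update_comm hli]
  rw [h1, Finset.sum_congr rfl h2, Function.update_idem, Function.update_self,
    Function.update_idem, Function.update_self, Finset.sum_add_distrib]
  ring

end

section
variable {k : ℕ} (η : Forms A (k+1))
  (hs : ∀ (Z : Fin (k+1) → Derivation ℝ A A) (i : Fin (k+1)) (a : A) (x : Derivation ℝ A A),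
      η (Function.update Z i (a • x)) = a * η (Function.update Z i x))
  (ha : ∀ (Z : Fin (k+1) → Derivation ℝ A A) (i : Fin (k+1)) (x y : Derivation ℝ A A),
      η (Function.update Z i (x + y)) =
        η (Function.update Z i x) + η (Function.update Z i y))

include hs in
lemma aux_contr_smul_vec (a : A) (x : Derivation ℝ A A) :
    contr (a • x) η = a • contr x η := by
  funext Z
  have h := hs (Fin.cons x Z) 0 a x
  simpa [contr, Fin.update_cons_zero] using h

include ha in
lemma aux_contr_add_vec (x y : Derivation ℝ A A) :
    contr (x + y) η = contr x η + contr y η := by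
  funext Z
  have h := ha (Fin.cons x Z) 0 x y
  simpa [contr, Fin.update_cons_zero] using h

include hs ha in
lemma aux_contr_sum_smul_vec {ι : Type*} (s : Finset ι) (c : ι → A)
    (V : ι → Derivation ℝ A A) :
    contr (∑ j ∈ s, c j • V j) η = ∑ j ∈ s, c j • contr (V j) η := by
  classical
  induction s using Finset.induction_on with
  | empty =>
    simp only [Finset.sum_empty]
    have h0 : (0 : Derivation ℝ A A) = (0 : A) • (0 : Derivation ℝ A A) := by simp
    rw [h0, aux_contr_smul_vec η hs]
    funext Z; simp
  | insert _ _ hx ih =>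
    rw [Finset.sum_insert hx, Finset.sum_insert hx, aux_contr_add_vec η ha,
      aux_contr_smul_vec η hs, ih]

end

end AuxLemmas

set_option maxHeartbeats 1000000

/-- Lemma 2.5 (iii): for a vector field `X`, a `p`-form `ω` (`p ≥ 1`, here of
degree `p + 1`) and a local orthonormal frame `(e₁, …, e_n)`,
`∑ᵢ ι(eᵢ)(R(X, eᵢ)ω) = -∇_X(d*ω) + d*(∇_X ω) + ∑_{i,j} ⟨∇_{eⱼ}X, eᵢ⟩ ι(eⱼ)(∇_{eᵢ}ω)`. -/
theorem sum_contract_curvature_eq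
    -- the metric
    (hg_symm : ∀ X Y : Derivation ℝ A A, g X Y = g Y X)
    (hg_add : ∀ X Y Z : Derivation ℝ A A, g (X + Y) Z = g X Z + g Y Z)
    (hg_smul : ∀ (a : A) (X Y : Derivation ℝ A A), g (a • X) Y = a * g X Y)
    -- the Levi-Civita connection
    (hnab_add₁ : ∀ X Y Z : Derivation ℝ A A, nab (X + Y) Z = nab X Z + nab Y Z)
    (hnab_smul₁ : ∀ (a : A) (X Y : Derivation ℝ A A), nab (a • X) Y = a • nab X Y)
    (hnab_add₂ : ∀ X Y Z : Derivation ℝ A A, nab X (Y + Z) = nab X Y + nab X Z)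
    (hnab_leibniz : ∀ (a : A) (X Y : Derivation ℝ A A),
      nab X (a • Y) = X a • Y + a • nab X Y)
    (hnab_metric : ∀ X Y Z : Derivation ℝ A A,
      X (g Y Z) = g (nab X Y) Z + g Y (nab X Z))
    (hnab_torsion : ∀ X Y : Derivation ℝ A A, nab X Y - nab Y X = ⁅X, Y⁆)
    -- the orthonormal frame
    (he_orth : ∀ i j, g (e i) (e j) = if i = j then 1 else 0)
    (he_expand : ∀ X : Derivation ℝ A A, X = ∑ i, g X (e i) • e i)
    -- a `p`-form, `p ≥ 1` (degree `p + 1` below)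
    (p : ℕ) (ω : Forms A (p + 1))
    (hω_add : ∀ (Z : Fin (p + 1) → Derivation ℝ A A) (i : Fin (p + 1))
      (x y : Derivation ℝ A A),
      ω (Function.update Z i (x + y)) =
        ω (Function.update Z i x) + ω (Function.update Z i y))
    (hω_smul : ∀ (Z : Fin (p + 1) → Derivation ℝ A A) (i : Fin (p + 1))
      (a : A) (x : Derivation ℝ A A),
      ω (Function.update Z i (a • x)) = a * ω (Function.update Z i x))
    (hω_alt : ∀ (Z : Fin (p + 1) → Derivation ℝ A A) (i j : Fin (p + 1)),
      i ≠ j → Z i = Z j → ω Z = 0)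
    (X : Derivation ℝ A A) :
    ∑ i, contr (e i) (Rform nab X (e i) ω) =
      -(covD nab X (codiffS nab e ω)) + codiffS nab e (covD nab X ω) +
        ∑ i, ∑ j, g (nab (e j) X) (e i) • contr (e j) (covD nab (e i) ω) := by
  classical
  -- slot linearity of covD Y ω
  have hslot_s : ∀ (Y : Derivation ℝ A A) (Z : Fin (p+1) → Derivation ℝ A A)
      (i : Fin (p+1)) (a : A) (x : Derivation ℝ A A),
      covD nab Y ω (Function.update Z i (a • x)) =
        a * covD nab Y ω (Function.update Z i x) :=
    fun Y => aux_covD_slot_smul nab ω hnab_leibniz hω_add hω_smul Y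
  have hslot_a : ∀ (Y : Derivation ℝ A A) (Z : Fin (p+1) → Derivation ℝ A A)
      (i : Fin (p+1)) (x y : Derivation ℝ A A),
      covD nab Y ω (Function.update Z i (x + y)) =
        covD nab Y ω (Function.update Z i x) + covD nab Y ω (Function.update Z i y) :=
    fun Y => aux_covD_slot_add nab ω hnab_add₂ hω_add Y
  -- antisymmetry of i j ↦ g (∇_X eᵢ) eⱼ
  have hanti : ∀ i j, g (nab X (e i)) (e j) + g (nab X (e j)) (e i) = 0 := by
    intro i j
    have h := hnab_metric X (e i) (e j)
    rw [he_orth, hg_symm (e i) (nab X (e j))] at h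
    rw [← h]
    split_ifs <;> simp
  have hT1 : ∀ i, contr (e i) (covD nab (nab X (e i)) ω)
      = ∑ j, g (nab X (e i)) (e j) • contr (e i) (covD nab (e j) ω) := by
    intro i
    conv_lhs => rw [he_expand (nab X (e i))]
    rw [aux_covD_sum_smul nab ω hnab_add₁ hnab_smul₁ hω_add hω_smul, aux_contr_sum]
    exact Finset.sum_congr rfl fun j _ => rfl
  have hT2 : ∀ i, contr (nab X (e i)) (covD nab (e i) ω)
      = ∑ j, g (nab X (e i)) (e j) • contr (e j) (covD nab (e i) ω) := by
    intro i
    conv_lhs => rw [he_expand (nab X (e i))]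
    exact aux_contr_sum_smul_vec (covD nab (e i) ω) (hslot_s _) (hslot_a _) _ _ _
  have hT3 : ∀ i, contr (e i) (covD nab (nab (e i) X) ω)
      = ∑ j, g (nab (e i) X) (e j) • contr (e i) (covD nab (e j) ω) := by
    intro i
    conv_lhs => rw [he_expand (nab (e i) X)]
    rw [aux_covD_sum_smul nab ω hnab_add₁ hnab_smul₁ hω_add hω_smul, aux_contr_sum]
    exact Finset.sum_congr rfl fun j _ => rfl
  -- the two "skew" sums cancel
  have hB : (∑ i, contr (e i) (covD nab (nab X (e i)) ω))
      + (∑ i, contr (nab X (e i)) (covD nab (e i) ω)) = 0 := by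
    simp only [hT1, hT2]
    have e2 : ∑ i, ∑ j, g (nab X (e i)) (e j) • contr (e j) (covD nab (e i) ω)
        = ∑ i, ∑ j, g (nab X (e j)) (e i) • contr (e i) (covD nab (e j) ω) :=
      Finset.sum_comm
    rw [e2]
    simp only [← Finset.sum_add_distrib, ← add_smul, hanti, zero_smul,
      Finset.sum_const_zero]
  -- the last sum on the right-hand side
  have hA : ∑ i, contr (e i) (covD nab (nab (e i) X) ω)
      = ∑ i, ∑ j, g (nab (e j) X) (e i) • contr (e j) (covD nab (e i) ω) := by
    simp only [hT3]
    exact Finset.sum_comm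
  -- torsion-freeness
  have htor : ∀ i, covD nab ⁅X, e i⁆ ω
      = covD nab (nab X (e i)) ω - covD nab (nab (e i) X) ω := by
    intro i
    rw [← hnab_torsion, sub_eq_add_neg, ← neg_one_smul A (nab (e i) X),
      aux_covD_add_vec nab ω hnab_add₁ hω_add,
      aux_covD_smul_vec nab ω hnab_smul₁ hω_smul, neg_one_smul, ← sub_eq_add_neg]
  -- commuting contraction and covariant derivative
  have hcc : ∀ (Y : Derivation ℝ A A) (η : Forms A (p+1)),
      covD nab X (contr Y η) = contr Y (covD nab X η) + contr (nab X Y) η := by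
    intro Y η
    rw [aux_contr_covD]
    abel
  -- assemble
  simp only [Rform, codiffS, aux_contr_sub, aux_covD_neg, aux_covD_sum, neg_neg, hcc, htor]
  rw [Finset.sum_sub_distrib, Finset.sum_sub_distrib, Finset.sum_sub_distrib,
    Finset.sum_add_distrib, ← hA]
  have hB' : ∑ i, contr (e i) (covD nab (nab X (e i)) ω)
      = -∑ i, contr (nab X (e i)) (covD nab (e i) ω) := by
    rw [eq_neg_iff_add_eq_zero]
    exact hB
  rw [hB']
  abel


end RiemannModel
end

section
/- Let (M, g) be a Riemannian manifold, X a vector field, and ω a parallel p-form (∇ω = 0, p ≥ 1). Then the Weitzenböck curvature operator satisfies ℛ_{p-1}(ι(X)ω) = ι(Ric(X))ω, where ℛ_{p-1}η = -Σ_{i,j} e^i ∧ ι(e_j)(R(e_i, e_j)η) for a local orthonormal frame (e_i) with dual coframe (e^i), and Ric(X) is the Ricci endomorphism applied to X. -/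
/- An algebraic (Koszul-style) model of a Riemannian manifold: the commutative
`ℝ`-algebra `A` plays the role of the ring of smooth functions, derivations of
`A` play the role of vector fields, `g` is the Riemannian metric, `nab` the
Levi-Civita connection (`A`-linear in the first slot, a derivation in the
second, metric and torsion-free), `e` a (local) orthonormal frame, and
`k`-forms are alternating `A`-multilinear functions
`(Fin k → Derivation ℝ A A) → A`. -/

namespace RiemannModel

variable {A : Type*} [CommRing A] [Algebra ℝ A]

variable (nab : Derivation ℝ A A → Derivation ℝ A A → Derivation ℝ A A)
variable (g : Derivation ℝ A A → Derivation ℝ A A → A)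
variable {n : ℕ} (e : Fin n → Derivation ℝ A A)

section Aux

lemma half_cancel (x : A) (h : x + x = 0) : x = 0 := by
  have h1 : (2:ℝ) • x = 0 := by rw [two_smul]; exact h
  have h2 := congrArg (fun y => (1/2 : ℝ) • y) h1
  simpa [smul_smul] using h2

lemma bracket_smul_left (a : A) (U V : Derivation ℝ A A) :
    ⁅a • U, V⁆ = a • ⁅U, V⁆ - (V a) • U := by
  ext f
  simp only [Derivation.commutator_apply, Derivation.sub_apply, Derivation.smul_apply,
    smul_eq_mul, Derivation.leibniz, map_sub]
  ring

lemma bracket_jacobi (U V W : Derivation ℝ A A) :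
    ⁅U, ⁅V, W⁆⁆ + ⁅V, ⁅W, U⁆⁆ + ⁅W, ⁅U, V⁆⁆ = 0 := by
  ext f
  simp only [Derivation.commutator_apply, Derivation.add_apply, Derivation.zero_apply, map_sub]
  ring

lemma bracket_anti (U V : Derivation ℝ A A) : ⁅U, V⁆ = -⁅V, U⁆ := by
  ext f; simp only [Derivation.commutator_apply, Derivation.neg_apply]; ring

lemma bracket_add_left (U U' V : Derivation ℝ A A) : ⁅U + U', V⁆ = ⁅U, V⁆ + ⁅U', V⁆ := by
  ext f; simp only [Derivation.commutator_apply, Derivation.add_apply, map_add]; ring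

section NabG

variable (hg_symm : ∀ X Y : Derivation ℝ A A, g X Y = g Y X)
variable (hg_add : ∀ X Y Z : Derivation ℝ A A, g (X + Y) Z = g X Z + g Y Z)
variable (hnab_add₁ : ∀ X Y Z : Derivation ℝ A A, nab (X + Y) Z = nab X Z + nab Y Z)
variable (hnab_smul₁ : ∀ (a : A) (X Y : Derivation ℝ A A), nab (a • X) Y = a • nab X Y)
variable (hnab_add₂ : ∀ X Y Z : Derivation ℝ A A, nab X (Y + Z) = nab X Y + nab X Z)
variable (hnab_leibniz : ∀ (a : A) (X Y : Derivation ℝ A A),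
      nab X (a • Y) = X a • Y + a • nab X Y)
variable (hnab_metric : ∀ X Y Z : Derivation ℝ A A,
      X (g Y Z) = g (nab X Y) Z + g Y (nab X Z))
variable (hnab_torsion : ∀ X Y : Derivation ℝ A A, nab X Y - nab Y X = ⁅X, Y⁆)

include hnab_add₁ in
lemma nab_sub₁ (X Y Z : Derivation ℝ A A) : nab (X - Y) Z = nab X Z - nab Y Z :=
  map_sub (AddMonoidHom.mk' (fun W => nab W Z) (fun a b => hnab_add₁ a b Z)) X Y

include hnab_add₁ in
lemma nab_neg₁ (X Z : Derivation ℝ A A) : nab (-X) Z = -nab X Z :=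
  map_neg (AddMonoidHom.mk' (fun W => nab W Z) (fun a b => hnab_add₁ a b Z)) X

include hnab_add₂ in
lemma nab_sub₂ (Y X Z : Derivation ℝ A A) : nab Y (X - Z) = nab Y X - nab Y Z :=
  map_sub (AddMonoidHom.mk' (fun W => nab Y W) (fun a b => hnab_add₂ Y a b)) X Z

include hg_add in
lemma g_sub₁ (X Y Z : Derivation ℝ A A) : g (X - Y) Z = g X Z - g Y Z :=
  map_sub (AddMonoidHom.mk' (fun W => g W Z) (fun a b => hg_add a b Z)) X Y

include hg_add in
lemma g_zero₁ (Z : Derivation ℝ A A) : g 0 Z = 0 :=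
  map_zero (AddMonoidHom.mk' (fun W => g W Z) (fun a b => hg_add a b Z))

include hg_add in
lemma g_neg₁ (X Z : Derivation ℝ A A) : g (-X) Z = -g X Z :=
  map_neg (AddMonoidHom.mk' (fun W => g W Z) (fun a b => hg_add a b Z)) X

include hg_symm hg_add in
lemma g_sub₂ (Z X Y : Derivation ℝ A A) : g Z (X - Y) = g Z X - g Z Y := by
  rw [hg_symm, g_sub₁ g hg_add, hg_symm, hg_symm Y]

include hg_add in
lemma g_sum₁ {ι : Type*} (s : Finset ι) (f : ι → Derivation ℝ A A) (Z : Derivation ℝ A A) :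
    g (∑ k ∈ s, f k) Z = ∑ k ∈ s, g (f k) Z :=
  map_sum (AddMonoidHom.mk' (fun W => g W Z) (fun a b => hg_add a b Z)) f s

include hnab_add₁ hnab_add₂ in
lemma Rvec_add₁ (U U' V W : Derivation ℝ A A) :
    Rvec nab (U + U') V W = Rvec nab U V W + Rvec nab U' V W := by
  unfold Rvec
  rw [hnab_add₁ U U' (nab V W), hnab_add₁ U U' W, hnab_add₂, bracket_add_left, hnab_add₁ ⁅U,V⁆]
  abel

include hnab_add₁ hnab_smul₁ hnab_leibniz in
lemma Rvec_smul₁ (a : A) (U V W : Derivation ℝ A A) :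
    Rvec nab (a • U) V W = a • Rvec nab U V W := by
  unfold Rvec
  rw [hnab_smul₁ a U (nab V W), hnab_smul₁ a U W, hnab_leibniz, bracket_smul_left,
    nab_sub₁ nab hnab_add₁, hnab_smul₁ a ⁅U,V⁆ W, hnab_smul₁ (V a) U W, smul_sub, smul_sub]
  abel

include hnab_add₁ in
lemma Rvec_anti (U V W : Derivation ℝ A A) : Rvec nab U V W = -Rvec nab V U W := by
  unfold Rvec
  rw [bracket_anti, nab_neg₁ nab hnab_add₁]
  abel

include hnab_add₁ hnab_add₂ in
lemma Rvec_sum₁ {ι : Type*} (s : Finset ι) (f : ι → Derivation ℝ A A)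
    (V W : Derivation ℝ A A) :
    Rvec nab (∑ k ∈ s, f k) V W = ∑ k ∈ s, Rvec nab (f k) V W :=
  map_sum (AddMonoidHom.mk' (fun U => Rvec nab U V W)
    (fun a b => Rvec_add₁ nab hnab_add₁ hnab_add₂ a b V W)) f s

include hnab_add₂ hnab_torsion in
lemma Rvec_bianchi (U V W : Derivation ℝ A A) :
    Rvec nab U V W + Rvec nab V W U + Rvec nab W U V = 0 := by
  have h1 : ∀ P Q R : Derivation ℝ A A,
      nab (⁅P,Q⁆) R = nab R (nab P Q) - nab R (nab Q P) - ⁅R, ⁅P,Q⁆⁆ := by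
    intro P Q R
    have t1 := hnab_torsion ⁅P,Q⁆ R
    have t2 : nab R ⁅P,Q⁆ = nab R (nab P Q) - nab R (nab Q P) := by
      rw [← hnab_torsion P Q, nab_sub₂ nab hnab_add₂]
    have t3 : (⁅⁅P,Q⁆, R⁆ : Derivation ℝ A A) = -⁅R, ⁅P,Q⁆⁆ := bracket_anti _ _
    rw [t3] at t1
    rw [← t2]
    linear_combination (norm := abel) t1
  have j := bracket_jacobi U V W
  unfold Rvec
  rw [h1 U V W, h1 V W U, h1 W U V, ← j]
  abel

include hg_symm hg_add hnab_add₂ hnab_metric in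
lemma Rg_skew (U V W T : Derivation ℝ A A) :
    g (Rvec nab U V W) T + g W (Rvec nab U V T) = 0 := by
  have c1 : U (V (g W T)) =
      g (nab U (nab V W)) T + g (nab V W) (nab U T) + (g (nab U W) (nab V T)
        + g W (nab U (nab V T))) := by
    rw [hnab_metric V W T, map_add, hnab_metric U (nab V W) T, hnab_metric U W (nab V T)]
  have c2 : V (U (g W T)) =
      g (nab V (nab U W)) T + g (nab U W) (nab V T) + (g (nab V W) (nab U T)
        + g W (nab V (nab U T))) := by
    rw [hnab_metric U W T, map_add, hnab_metric V (nab U W) T, hnab_metric V W (nab U T)]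
  have c3 : (⁅U,V⁆ : Derivation ℝ A A) (g W T) = g (nab ⁅U,V⁆ W) T + g W (nab ⁅U,V⁆ T) :=
    hnab_metric _ W T
  have c4 : (⁅U,V⁆ : Derivation ℝ A A) (g W T) = U (V (g W T)) - V (U (g W T)) :=
    Derivation.commutator_apply _
  unfold Rvec
  rw [g_sub₁ g hg_add, g_sub₁ g hg_add, g_sub₂ g hg_symm hg_add, g_sub₂ g hg_symm hg_add]
  linear_combination c2 - c1 + c3 - c4

include hg_symm hg_add hnab_add₂ hnab_torsion in
lemma Rg_bianchi (U V W T : Derivation ℝ A A) :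
    g (Rvec nab U V W) T + g (Rvec nab V W U) T + g (Rvec nab W U V) T = 0 := by
  have h := congrArg (fun P => g P T) (Rvec_bianchi nab hnab_add₂ hnab_torsion U V W)
  simpa [hg_add, g_zero₁ g hg_add] using h

include hg_symm hg_add hnab_add₁ hnab_add₂ hnab_metric hnab_torsion in
lemma Rg_pair (Z X Y T : Derivation ℝ A A) :
    g (Rvec nab Z X Y) T = g (Rvec nab Y T Z) X := by
  have skew34 : ∀ P Q R S : Derivation ℝ A A,
      g (Rvec nab P Q R) S = -g (Rvec nab P Q S) R := by
    intro P Q R S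
    have h := Rg_skew nab g hg_symm hg_add hnab_add₂ hnab_metric P Q R S
    have h2 : g R (Rvec nab P Q S) = g (Rvec nab P Q S) R := hg_symm _ _
    linear_combination h - h2
  have skew12 : ∀ P Q R S : Derivation ℝ A A,
      g (Rvec nab P Q R) S = -g (Rvec nab Q P R) S := by
    intro P Q R S
    rw [Rvec_anti nab hnab_add₁ P Q R, g_neg₁ g hg_add]
  have bb := Rg_bianchi nab g hg_symm hg_add hnab_add₂ hnab_torsion
  have b1 := bb X Y Z T
  have b2 := bb Y Z T X
  have b3 := bb Z T X Y
  have b4 := bb T X Y Z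
  have c1 := skew34 X Y T Z
  have c2 := skew34 Y Z T X
  have c3 := skew34 Z T X Y
  have c4 := skew34 T X Y Z
  have d1 : g (Rvec nab X Z T) Y = g (Rvec nab Z X Y) T := by
    rw [skew12 X Z T Y, skew34 Z X T Y, neg_neg]
  have d2 : g (Rvec nab Y T X) Z = g (Rvec nab T Y Z) X := by
    rw [skew12 Y T X Z, skew34 T Y X Z, neg_neg]
  have e1 := skew12 T Y Z X
  have q : (g (Rvec nab Z X Y) T - g (Rvec nab Y T Z) X)
      + (g (Rvec nab Z X Y) T - g (Rvec nab Y T Z) X) = 0 := by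
    linear_combination b1 + b2 + b3 + b4 - c1 - c2 - c3 - c4 - d1 - d2 - 2 * e1
  exact sub_eq_zero.mp (half_cancel _ q)

end NabG
end Aux

section FormsAux

lemma cons_update' {q : ℕ} {β : Type*} (x : β) (p : Fin (q + 1) → β) (i : Fin (q + 1)) (y : β) :
    Function.update (Fin.cons x p : Fin (q + 2) → β) i.succ y
      = Fin.cons x (Function.update p i y) := by
  funext z
  induction z using Fin.cases with
  | zero =>
    rw [Function.update_of_ne (Fin.succ_ne_zero i).symm, Fin.cons_zero, Fin.cons_zero]
  | succ j =>
    by_cases hj : j = i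
    · subst hj
      rw [Function.update_self, Fin.cons_succ, Function.update_self]
    · have hne : j.succ ≠ i.succ := fun hh => hj (Fin.succ_injective _ hh)
      rw [Function.update_of_ne hne, Fin.cons_succ, Fin.cons_succ, Function.update_of_ne hj]

lemma update_zero' {q : ℕ} {β : Type*} (Z : Fin (q + 1) → β) (v : β) :
    Function.update Z 0 v = Fin.cons v (Fin.tail Z) := by
  conv_lhs => rw [← Fin.cons_self_tail Z]
  rw [Fin.update_cons_zero]

lemma form_upd_sum {k : ℕ} (ω : Forms A k)
    (hadd : ∀ (Z : Fin k → Derivation ℝ A A) (i : Fin k) (x y : Derivation ℝ A A),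
      ω (Function.update Z i (x + y)) = ω (Function.update Z i x) + ω (Function.update Z i y))
    (Z : Fin k → Derivation ℝ A A) (i : Fin k) {ι : Type*} (s : Finset ι)
    (f : ι → Derivation ℝ A A) :
    ω (Function.update Z i (∑ m ∈ s, f m)) = ∑ m ∈ s, ω (Function.update Z i (f m)) :=
  map_sum (AddMonoidHom.mk' (fun v => ω (Function.update Z i v)) (hadd Z i)) f s

lemma form_upd_sub {k : ℕ} (ω : Forms A k)
    (hadd : ∀ (Z : Fin k → Derivation ℝ A A) (i : Fin k) (x y : Derivation ℝ A A),
      ω (Function.update Z i (x + y)) = ω (Function.update Z i x) + ω (Function.update Z i y))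
    (Z : Fin k → Derivation ℝ A A) (i : Fin k) (x y : Derivation ℝ A A) :
    ω (Function.update Z i (x - y)) = ω (Function.update Z i x) - ω (Function.update Z i y) :=
  map_sub (AddMonoidHom.mk' (fun v => ω (Function.update Z i v)) (hadd Z i)) x y

lemma form_cons_add {k : ℕ} (ω : Forms A (k + 1))
    (hadd : ∀ (Z : Fin (k + 1) → Derivation ℝ A A) (i : Fin (k + 1)) (x y : Derivation ℝ A A),
      ω (Function.update Z i (x + y)) = ω (Function.update Z i x) + ω (Function.update Z i y))
    (T : Fin k → Derivation ℝ A A) (x y : Derivation ℝ A A) :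
    ω (Fin.cons (x + y) T) = ω (Fin.cons x T) + ω (Fin.cons y T) := by
  have h := hadd (Fin.cons x T) 0 x y
  rwa [Fin.update_cons_zero, Fin.update_cons_zero, Fin.update_cons_zero] at h

lemma form_cons_smul {k : ℕ} (ω : Forms A (k + 1))
    (hsmul : ∀ (Z : Fin (k + 1) → Derivation ℝ A A) (i : Fin (k + 1)) (a : A)
      (x : Derivation ℝ A A),
      ω (Function.update Z i (a • x)) = a * ω (Function.update Z i x))
    (T : Fin k → Derivation ℝ A A) (a : A) (x : Derivation ℝ A A) :
    ω (Fin.cons (a • x) T) = a * ω (Fin.cons x T) := by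
  have h := hsmul (Fin.cons x T) 0 a x
  rwa [Fin.update_cons_zero, Fin.update_cons_zero] at h

lemma form_cons_sum {k : ℕ} (ω : Forms A (k + 1))
    (hadd : ∀ (Z : Fin (k + 1) → Derivation ℝ A A) (i : Fin (k + 1)) (x y : Derivation ℝ A A),
      ω (Function.update Z i (x + y)) = ω (Function.update Z i x) + ω (Function.update Z i y))
    (T : Fin k → Derivation ℝ A A) {ι : Type*} (s : Finset ι) (f : ι → Derivation ℝ A A) :
    ω (Fin.cons (∑ m ∈ s, f m) T) = ∑ m ∈ s, ω (Fin.cons (f m) T) :=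
  map_sum (AddMonoidHom.mk' (fun v => ω (Fin.cons v T))
    (fun a b => form_cons_add ω hadd T a b)) f s

lemma form_cons_sub {k : ℕ} (ω : Forms A (k + 1))
    (hadd : ∀ (Z : Fin (k + 1) → Derivation ℝ A A) (i : Fin (k + 1)) (x y : Derivation ℝ A A),
      ω (Function.update Z i (x + y)) = ω (Function.update Z i x) + ω (Function.update Z i y))
    (T : Fin k → Derivation ℝ A A) (x y : Derivation ℝ A A) :
    ω (Fin.cons (x - y) T) = ω (Fin.cons x T) - ω (Fin.cons y T) :=
  map_sub (AddMonoidHom.mk' (fun v => ω (Fin.cons v T))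
    (fun a b => form_cons_add ω hadd T a b)) x y

lemma form_swap_upd {k : ℕ} (ω : Forms A k)
    (hadd : ∀ (Z : Fin k → Derivation ℝ A A) (i : Fin k) (x y : Derivation ℝ A A),
      ω (Function.update Z i (x + y)) = ω (Function.update Z i x) + ω (Function.update Z i y))
    (halt : ∀ (Z : Fin k → Derivation ℝ A A) (i j : Fin k), i ≠ j → Z i = Z j → ω Z = 0)
    (Z : Fin k → Derivation ℝ A A) {i j : Fin k} (hij : i ≠ j) (u v : Derivation ℝ A A) :
    ω (Function.update (Function.update Z i u) j v)
      = -ω (Function.update (Function.update Z i v) j u) := by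
  have halt2 : ∀ (Z' : Fin k → Derivation ℝ A A) (w : Derivation ℝ A A),
      ω (Function.update (Function.update Z' i w) j w) = 0 := by
    intro Z' w
    refine halt _ i j hij ?_
    rw [Function.update_of_ne hij, Function.update_self, Function.update_self]
  have h0 : ω (Function.update (Function.update Z i (u + v)) j (u + v)) = 0 := halt2 Z (u + v)
  rw [hadd, Function.update_comm hij (u + v) u Z, Function.update_comm hij (u + v) v Z,
    hadd, hadd, Function.update_comm hij.symm u u Z, Function.update_comm hij.symm u v Z,
    Function.update_comm hij.symm v u Z, Function.update_comm hij.symm v v Z,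
    halt2, halt2] at h0
  linear_combination h0

lemma form_swap01 {q : ℕ} (ω : Forms A (q + 2))
    (hadd : ∀ (Z : Fin (q + 2) → Derivation ℝ A A) (i : Fin (q + 2)) (x y : Derivation ℝ A A),
      ω (Function.update Z i (x + y)) = ω (Function.update Z i x) + ω (Function.update Z i y))
    (halt : ∀ (Z : Fin (q + 2) → Derivation ℝ A A) (i j : Fin (q + 2)),
      i ≠ j → Z i = Z j → ω Z = 0)
    (u v : Derivation ℝ A A) (W : Fin q → Derivation ℝ A A) :
    ω (Fin.cons u (Fin.cons v W)) = -ω (Fin.cons v (Fin.cons u W)) := by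
  have h01 : (0 : Fin (q + 2)) ≠ 1 := by simp [Fin.ext_iff]
  set T : Fin (q + 2) → Derivation ℝ A A := Fin.cons u (Fin.cons v W) with hT
  have h := form_swap_upd ω hadd halt T h01 u v
  have e1 : Function.update (Function.update T 0 u) 1 v = T := by
    have k1 : Function.update T 0 u = T := Function.update_eq_self 0 T
    have k2 : Function.update T 1 v = T := Function.update_eq_self 1 T
    rw [k1, k2]
  have e2 : Function.update (Function.update T 0 v) 1 u = Fin.cons v (Fin.cons u W) := by
    have k1 : Function.update T 0 v = Fin.cons v (Fin.cons v W) := by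
      rw [hT, Fin.update_cons_zero]
    have k2 : Function.update (Fin.cons v (Fin.cons v W)) 1 u
        = (Fin.cons v (Fin.cons u W) : Fin (q + 2) → Derivation ℝ A A) := by
      rw [show (1 : Fin (q + 2)) = Fin.succ 0 from rfl, cons_update', Fin.update_cons_zero]
    rw [k1, k2]
  rwa [e1, e2] at h

lemma succAbove_shift {q : ℕ} (Z : Fin (q + 1) → Derivation ℝ A A) (i : Fin q) :
    (Function.update Z i.succ (Z i.castSucc)) ∘ (i.castSucc).succAbove
      = Z ∘ i.succ.succAbove := by
  funext b
  simp only [Function.comp_apply, Fin.succAbove]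
  rcases lt_trichotomy (b : ℕ) (i : ℕ) with h | h | h
  · have c1 : b.castSucc < i.castSucc := by
      simp only [Fin.lt_def, Fin.coe_castSucc]; omega
    have c2 : b.castSucc < i.succ := by
      simp only [Fin.lt_def, Fin.coe_castSucc, Fin.val_succ]; omega
    rw [if_pos c1, if_pos c2]
    exact Function.update_of_ne
      (by simp only [ne_eq, Fin.ext_iff, Fin.coe_castSucc, Fin.val_succ]; omega) _ _
  · have hb : b = i := Fin.ext h
    subst hb
    have c1 : ¬ b.castSucc < b.castSucc := lt_irrefl _
    have c2 : b.castSucc < b.succ := Fin.castSucc_lt_succ (i := b)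
    rw [if_neg c1, if_pos c2, Function.update_self]
  · have c1 : ¬ b.castSucc < i.castSucc := by
      simp only [Fin.lt_def, Fin.coe_castSucc]; omega
    have c2 : ¬ b.castSucc < i.succ := by
      simp only [Fin.lt_def, Fin.coe_castSucc, Fin.val_succ]; omega
    rw [if_neg c1, if_neg c2]
    exact Function.update_of_ne
      (by simp only [ne_eq, Fin.ext_iff, Fin.val_succ]; omega) _ _

lemma form_move_front {q : ℕ} (ω : Forms A (q + 2))
    (hadd : ∀ (Z : Fin (q + 2) → Derivation ℝ A A) (i : Fin (q + 2)) (x y : Derivation ℝ A A),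
      ω (Function.update Z i (x + y)) = ω (Function.update Z i x) + ω (Function.update Z i y))
    (halt : ∀ (Z : Fin (q + 2) → Derivation ℝ A A) (i j : Fin (q + 2)),
      i ≠ j → Z i = Z j → ω Z = 0)
    (a : Fin (q + 1)) (Z : Fin (q + 1) → Derivation ℝ A A) (U V : Derivation ℝ A A) :
    ω (Fin.cons U (Function.update Z a V))
      = (-1 : A) ^ ((a : ℕ) + 1) * ω (Fin.cons V (Fin.cons U (Z ∘ a.succAbove))) := by
  induction a using Fin.induction generalizing Z U V with
  | zero =>
    have hz : Function.update Z 0 V = Fin.cons V (Fin.tail Z) := update_zero' Z V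
    have hsa : Z ∘ (0 : Fin (q + 1)).succAbove = Fin.tail Z := by
      funext b; simp [Fin.zero_succAbove, Fin.tail]
    rw [hz, hsa, form_swap01 ω hadd halt]
    simp
  | succ i ih =>
    have hcs : i.castSucc ≠ i.succ := (Fin.castSucc_lt_succ (i := i)).ne
    have hrs : Fin.succ (i.castSucc) ≠ Fin.succ (i.succ) := by
      simp [Fin.ext_iff]
    set T : Fin (q + 2) → Derivation ℝ A A := Fin.cons U (Function.update Z i.succ V) with hT
    have hTr : T (Fin.succ i.castSucc) = Z i.castSucc := by
      rw [hT, Fin.cons_succ]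
      exact Function.update_of_ne hcs _ _
    have hTs : T (Fin.succ i.succ) = V := by
      rw [hT, Fin.cons_succ, Function.update_self]
    have h := form_swap_upd ω hadd halt T hrs (Z i.castSucc) V
    have e1 : Function.update (Function.update T (Fin.succ i.castSucc) (Z i.castSucc))
        (Fin.succ i.succ) V = T := by
      rw [← hTr, Function.update_eq_self, ← hTs, Function.update_eq_self]
    have e2 : Function.update (Function.update T (Fin.succ i.castSucc) V)
        (Fin.succ i.succ) (Z i.castSucc)
        = (Fin.cons U (Function.update (Function.update Z i.succ (Z i.castSucc)) i.castSucc V)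
            : Fin (q + 2) → Derivation ℝ A A) := by
      have f1 : Function.update T (Fin.succ i.castSucc) V
          = (Fin.cons U (Function.update (Function.update Z i.succ V) i.castSucc V)
              : Fin (q + 2) → Derivation ℝ A A) := by
        rw [hT]
        exact cons_update' U (Function.update Z i.succ V) i.castSucc V
      have f2 : Function.update
          (Fin.cons U (Function.update (Function.update Z i.succ V) i.castSucc V)
            : Fin (q + 2) → Derivation ℝ A A)
          (Fin.succ i.succ) (Z i.castSucc)
          = (Fin.cons U (Function.update
              (Function.update (Function.update Z i.succ V) i.castSucc V) i.succ
              (Z i.castSucc)) : Fin (q + 2) → Derivation ℝ A A) :=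
        cons_update' U _ i.succ (Z i.castSucc)
      rw [f1, f2]
      congr 1
      rw [Function.update_comm hcs.symm V V Z, Function.update_idem,
        Function.update_comm hcs V (Z i.castSucc) Z]
    rw [e1, e2] at h
    rw [h, ih, succAbove_shift, Fin.coe_castSucc, Fin.val_succ]
    ring

lemma form_par' {k : ℕ} (ω : Forms A k)
    (hpar : ∀ Y : Derivation ℝ A A, covD nab Y ω = 0)
    (Y : Derivation ℝ A A) (Z : Fin k → Derivation ℝ A A) :
    Y (ω Z) = ∑ i, ω (Function.update Z i (nab Y (Z i))) := by
  have h := congrFun (hpar Y) Z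
  simp only [covD, Pi.zero_apply] at h
  exact sub_eq_zero.mp h

lemma form_star {k : ℕ} (ω : Forms A k)
    (hadd : ∀ (Z : Fin k → Derivation ℝ A A) (i : Fin k) (x y : Derivation ℝ A A),
      ω (Function.update Z i (x + y)) = ω (Function.update Z i x) + ω (Function.update Z i y))
    (hpar : ∀ Y : Derivation ℝ A A, covD nab Y ω = 0)
    (U V : Derivation ℝ A A) (Z : Fin k → Derivation ℝ A A) :
    ∑ m, ω (Function.update Z m (Rvec nab U V (Z m))) = 0 := by
  have par' := form_par' nab ω hpar
  set F : Fin k → Fin k → A := fun m l =>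
    ω (Function.update (Function.update Z m (nab V (Z m))) l
        (nab U (Function.update Z m (nab V (Z m)) l))) with hF
  set G : Fin k → Fin k → A := fun m l =>
    ω (Function.update (Function.update Z m (nab U (Z m))) l
        (nab V (Function.update Z m (nab U (Z m)) l))) with hG
  have h1 : U (V (ω Z)) = ∑ m, ∑ l, F m l := by
    rw [par' V Z, map_sum]
    exact Finset.sum_congr rfl fun m _ => par' U _
  have h2 : V (U (ω Z)) = ∑ m, ∑ l, G m l := by
    rw [par' U Z, map_sum]
    exact Finset.sum_congr rfl fun m _ => par' V _
  have h3 : (⁅U, V⁆ : Derivation ℝ A A) (ω Z)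
      = ∑ m, ω (Function.update Z m (nab ⁅U, V⁆ (Z m))) := par' _ Z
  have h4 : (⁅U, V⁆ : Derivation ℝ A A) (ω Z) = U (V (ω Z)) - V (U (ω Z)) :=
    Derivation.commutator_apply _
  have hFG : ∀ m l, F m l = (if l = m then F m m - G m m else 0) + G l m := by
    intro m l
    by_cases h : l = m
    · subst h; simp
    · have h' : l ≠ m := h
      rw [if_neg h, zero_add]
      simp only [hF, hG, Function.update_of_ne h', Function.update_of_ne (Ne.symm h')]
      rw [Function.update_comm (Ne.symm h') (nab V (Z m)) (nab U (Z l)) Z]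
  have hsum : ∑ m, ∑ l, F m l = (∑ m, (F m m - G m m)) + ∑ m, ∑ l, G m l := by
    have hrow : ∀ m : Fin k, ∑ l, F m l = (F m m - G m m) + ∑ l, G l m := by
      intro m
      calc ∑ l, F m l = ∑ l, ((if l = m then F m m - G m m else 0) + G l m) :=
            Finset.sum_congr rfl fun l _ => hFG m l
        _ = (∑ l, if l = m then F m m - G m m else 0) + ∑ l, G l m :=
            Finset.sum_add_distrib
        _ = (F m m - G m m) + ∑ l, G l m := by
            rw [Finset.sum_ite_eq' Finset.univ m (fun _ => F m m - G m m)]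
            simp
    calc ∑ m, ∑ l, F m l = ∑ m, ((F m m - G m m) + ∑ l, G l m) :=
          Finset.sum_congr rfl fun m _ => hrow m
      _ = (∑ m, (F m m - G m m)) + ∑ m, ∑ l, G l m := Finset.sum_add_distrib
      _ = (∑ m, (F m m - G m m)) + ∑ m, ∑ l, G m l := by
          have hc : (∑ m : Fin k, ∑ l : Fin k, G l m) = ∑ m : Fin k, ∑ l : Fin k, G m l :=
            Finset.sum_comm
          rw [hc]
  have hdF : ∀ m, F m m = ω (Function.update Z m (nab U (nab V (Z m)))) := by
    intro m
    simp only [hF, Function.update_self, Function.update_idem]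
  have hdG : ∀ m, G m m = ω (Function.update Z m (nab V (nab U (Z m)))) := by
    intro m
    simp only [hG, Function.update_self, Function.update_idem]
  calc ∑ m, ω (Function.update Z m (Rvec nab U V (Z m)))
      = ∑ m, (F m m - G m m - ω (Function.update Z m (nab ⁅U, V⁆ (Z m)))) := by
        refine Finset.sum_congr rfl fun m _ => ?_
        rw [show Rvec nab U V (Z m)
            = nab U (nab V (Z m)) - nab V (nab U (Z m)) - nab ⁅U, V⁆ (Z m) from rfl,
          form_upd_sub ω hadd, form_upd_sub ω hadd, hdF m, hdG m]
    _ = (∑ m, (F m m - G m m)) - ∑ m, ω (Function.update Z m (nab ⁅U, V⁆ (Z m))) :=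
        Finset.sum_sub_distrib _ _
    _ = 0 := by
        have e : ∑ m, (F m m - G m m) = U (V (ω Z)) - V (U (ω Z)) := by
          rw [h1, h2]; linear_combination -hsum
        rw [e, ← h3, h4]; ring

lemma covD_contr {m : ℕ} (ω : Forms A (m + 1))
    (hpar : ∀ Y : Derivation ℝ A A, covD nab Y ω = 0)
    (Y X' : Derivation ℝ A A) :
    covD nab Y (contr X' ω) = contr (nab Y X') ω := by
  funext Z
  have h := form_par' nab ω hpar Y (Fin.cons X' Z)
  rw [Fin.sum_univ_succ] at h
  simp only [Fin.cons_zero, Fin.cons_succ, Fin.update_cons_zero, ← Fin.cons_update] at h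
  simp only [covD, contr]
  rw [h]
  abel

lemma Rform_contr {m : ℕ} (ω : Forms A (m + 1))
    (hadd : ∀ (Z : Fin (m + 1) → Derivation ℝ A A) (i : Fin (m + 1)) (x y : Derivation ℝ A A),
      ω (Function.update Z i (x + y)) = ω (Function.update Z i x) + ω (Function.update Z i y))
    (hpar : ∀ Y : Derivation ℝ A A, covD nab Y ω = 0)
    (U V X' : Derivation ℝ A A) :
    Rform nab U V (contr X' ω) = contr (Rvec nab U V X') ω := by
  unfold Rform
  rw [covD_contr nab ω hpar V X', covD_contr nab ω hpar U (nab V X'),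
    covD_contr nab ω hpar U X', covD_contr nab ω hpar V (nab U X'),
    covD_contr nab ω hpar ⁅U, V⁆ X']
  funext Z
  simp only [Pi.sub_apply, contr]
  rw [show Rvec nab U V X' = nab U (nab V X') - nab V (nab U X') - nab ⁅U, V⁆ X' from rfl,
    form_cons_sub ω hadd, form_cons_sub ω hadd]

end FormsAux

set_option maxHeartbeats 1000000

/-- Corollary 2.6 (i): for a vector field `X` and a *parallel* `p`-form `ω`
(`p ≥ 1`, here of degree `p + 1`), the Weitzenböck curvature operator satisfies
`ℛ_{p-1}(ι(X)ω) = ι(Ric(X))ω`. -/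
theorem Rcal_contract_parallel_eq_contract_ricci
    -- the metric
    (hg_symm : ∀ X Y : Derivation ℝ A A, g X Y = g Y X)
    (hg_add : ∀ X Y Z : Derivation ℝ A A, g (X + Y) Z = g X Z + g Y Z)
    (hg_smul : ∀ (a : A) (X Y : Derivation ℝ A A), g (a • X) Y = a * g X Y)
    -- the Levi-Civita connection
    (hnab_add₁ : ∀ X Y Z : Derivation ℝ A A, nab (X + Y) Z = nab X Z + nab Y Z)
    (hnab_smul₁ : ∀ (a : A) (X Y : Derivation ℝ A A), nab (a • X) Y = a • nab X Y)
    (hnab_add₂ : ∀ X Y Z : Derivation ℝ A A, nab X (Y + Z) = nab X Y + nab X Z)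
    (hnab_leibniz : ∀ (a : A) (X Y : Derivation ℝ A A),
      nab X (a • Y) = X a • Y + a • nab X Y)
    (hnab_metric : ∀ X Y Z : Derivation ℝ A A,
      X (g Y Z) = g (nab X Y) Z + g Y (nab X Z))
    (hnab_torsion : ∀ X Y : Derivation ℝ A A, nab X Y - nab Y X = ⁅X, Y⁆)
    -- the orthonormal frame
    (he_orth : ∀ i j, g (e i) (e j) = if i = j then 1 else 0)
    (he_expand : ∀ X : Derivation ℝ A A, X = ∑ i, g X (e i) • e i)
    -- a parallel `p`-form, `p ≥ 1` (degree `p + 1` below)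
    (p : ℕ) (ω : Forms A (p + 1))
    (hω_add : ∀ (Z : Fin (p + 1) → Derivation ℝ A A) (i : Fin (p + 1))
      (x y : Derivation ℝ A A),
      ω (Function.update Z i (x + y)) =
        ω (Function.update Z i x) + ω (Function.update Z i y))
    (hω_smul : ∀ (Z : Fin (p + 1) → Derivation ℝ A A) (i : Fin (p + 1))
      (a : A) (x : Derivation ℝ A A),
      ω (Function.update Z i (a • x)) = a * ω (Function.update Z i x))
    (hω_alt : ∀ (Z : Fin (p + 1) → Derivation ℝ A A) (i j : Fin (p + 1)),
      i ≠ j → Z i = Z j → ω Z = 0)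
    (hω_par : ∀ Y : Derivation ℝ A A, covD nab Y ω = 0)
    (X : Derivation ℝ A A) :
    Rcal nab g e (contr X ω) = contr (ricci nab e X) ω := by
  cases p with
  | zero =>
    have hRcal : Rcal nab g e (contr X ω) = (0 : Forms A 0) := rfl
    rw [hRcal]
    funext Z
    have hs : contr (ricci nab e X) ω Z
        = ∑ j, ω (Fin.cons (Rvec nab X (e j) (e j)) Z) := by
      simp only [contr, ricci]
      exact form_cons_sum ω hω_add Z Finset.univ _
    have hterm : ∀ j, ω (Fin.cons (Rvec nab X (e j) (e j)) Z) = 0 := by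
      intro j
      have hst := form_star nab ω hω_add hω_par X (e j) (Fin.cons (e j) Z)
      rw [Fin.sum_univ_succ] at hst
      simp only [Fin.cons_zero, Fin.cons_succ, Fin.update_cons_zero, Finset.univ_eq_empty,
        Finset.sum_empty, add_zero] at hst
      exact hst
    rw [hs]
    simp [hterm]
  | succ q =>
    funext Z
    -- unfold the left-hand side
    have hRcal : Rcal nab g e (contr X ω)
        = -(∑ i, ∑ j, wedge1 (flat g (e i))
            (contr (e j) (Rform nab (e i) (e j) (contr X ω)))) := rfl
    have hRf : ∀ i j : Fin n, Rform nab (e i) (e j) (contr X ω)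
        = contr (Rvec nab (e i) (e j) X) ω :=
      fun i j => Rform_contr nab ω hω_add hω_par (e i) (e j) X
    -- Step D : collapse the i-sum
    have stepD : ∀ (j : Fin n) (a : Fin (q + 1)),
        ∑ i, g (e i) (Z a) * ω (Fin.cons (Rvec nab (e i) (e j) X)
            (Fin.cons (e j) (Z ∘ a.succAbove)))
          = ω (Fin.cons (Rvec nab (Z a) (e j) X) (Fin.cons (e j) (Z ∘ a.succAbove))) := by
      intro j a
      calc ∑ i, g (e i) (Z a) * ω (Fin.cons (Rvec nab (e i) (e j) X)
              (Fin.cons (e j) (Z ∘ a.succAbove)))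
          = ∑ i, ω (Fin.cons ((g (Z a) (e i)) • Rvec nab (e i) (e j) X)
              (Fin.cons (e j) (Z ∘ a.succAbove))) := by
            refine Finset.sum_congr rfl fun i _ => ?_
            rw [form_cons_smul ω hω_smul, hg_symm]
        _ = ∑ i, ω (Fin.cons (Rvec nab ((g (Z a) (e i)) • e i) (e j) X)
              (Fin.cons (e j) (Z ∘ a.succAbove))) := by
            refine Finset.sum_congr rfl fun i _ => ?_
            rw [Rvec_smul₁ nab hnab_add₁ hnab_smul₁ hnab_leibniz]
        _ = ω (Fin.cons (∑ i, Rvec nab ((g (Z a) (e i)) • e i) (e j) X)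
              (Fin.cons (e j) (Z ∘ a.succAbove))) :=
            (form_cons_sum ω hω_add _ Finset.univ _).symm
        _ = ω (Fin.cons (Rvec nab (∑ i, (g (Z a) (e i)) • e i) (e j) X)
              (Fin.cons (e j) (Z ∘ a.succAbove))) := by
            rw [Rvec_sum₁ nab hnab_add₁ hnab_add₂]
        _ = ω (Fin.cons (Rvec nab (Z a) (e j) X) (Fin.cons (e j) (Z ∘ a.succAbove))) := by
            rw [← he_expand (Z a)]
    -- left-hand side
    have hL : Rcal nab g e (contr X ω) Z
        = -∑ j, ∑ a : Fin (q + 1), (-1 : A) ^ (a : ℕ)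
            * ω (Fin.cons (Rvec nab (Z a) (e j) X) (Fin.cons (e j) (Z ∘ a.succAbove))) := by
      rw [hRcal]
      simp only [Pi.neg_apply, Finset.sum_apply]
      congr 1
      calc ∑ i, ∑ j, wedge1 (flat g (e i))
              (contr (e j) (Rform nab (e i) (e j) (contr X ω))) Z
          = ∑ i, ∑ j, ∑ a : Fin (q + 1), (-1 : A) ^ (a : ℕ) * g (e i) (Z a)
              * ω (Fin.cons (Rvec nab (e i) (e j) X)
                  (Fin.cons (e j) (Z ∘ a.succAbove))) := by
            refine Finset.sum_congr rfl fun i _ => Finset.sum_congr rfl fun j _ => ?_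
            rw [hRf i j]
            simp only [wedge1, flat, contr]
        _ = ∑ j, ∑ i, ∑ a : Fin (q + 1), (-1 : A) ^ (a : ℕ) * g (e i) (Z a)
              * ω (Fin.cons (Rvec nab (e i) (e j) X)
                  (Fin.cons (e j) (Z ∘ a.succAbove))) := Finset.sum_comm
        _ = ∑ j, ∑ a : Fin (q + 1), ∑ i, (-1 : A) ^ (a : ℕ) * g (e i) (Z a)
              * ω (Fin.cons (Rvec nab (e i) (e j) X)
                  (Fin.cons (e j) (Z ∘ a.succAbove))) :=
            Finset.sum_congr rfl fun j _ => Finset.sum_comm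
        _ = ∑ j, ∑ a : Fin (q + 1), (-1 : A) ^ (a : ℕ)
              * ω (Fin.cons (Rvec nab (Z a) (e j) X)
                  (Fin.cons (e j) (Z ∘ a.succAbove))) := by
            refine Finset.sum_congr rfl fun j _ => Finset.sum_congr rfl fun a _ => ?_
            rw [← stepD j a, Finset.mul_sum]
            exact Finset.sum_congr rfl fun i _ => by ring
    -- right-hand side
    have stepF : ∀ j : Fin n, ω (Fin.cons (Rvec nab X (e j) (e j)) Z)
        = -∑ a : Fin (q + 1),
            ω (Fin.cons (e j) (Function.update Z a (Rvec nab X (e j) (Z a)))) := by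
      intro j
      have hst := form_star nab ω hω_add hω_par X (e j) (Fin.cons (e j) Z)
      rw [Fin.sum_univ_succ] at hst
      simp only [Fin.cons_zero, Fin.cons_succ, Fin.update_cons_zero] at hst
      have hupd : ∀ (a : Fin (q + 1)) (v : Derivation ℝ A A),
          Function.update (Fin.cons (e j) Z : Fin (q + 2) → Derivation ℝ A A) a.succ v
            = (Fin.cons (e j) (Function.update Z a v) : Fin (q + 2) → Derivation ℝ A A) :=
        fun a v => cons_update' (e j) Z a v
      simp only [hupd] at hst
      linear_combination hst
    have hR : contr (ricci nab e X) ω Z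
        = ∑ j, ∑ a : Fin (q + 1), (-1 : A) ^ (a : ℕ)
            * ω (Fin.cons (Rvec nab X (e j) (Z a)) (Fin.cons (e j) (Z ∘ a.succAbove))) := by
      have hRic : contr (ricci nab e X) ω Z
          = ∑ j, ω (Fin.cons (Rvec nab X (e j) (e j)) Z) := by
        simp only [contr, ricci]
        exact form_cons_sum ω hω_add Z Finset.univ _
      rw [hRic]
      refine Finset.sum_congr rfl fun j _ => ?_
      rw [stepF j, ← Finset.sum_neg_distrib]
      refine Finset.sum_congr rfl fun a _ => ?_
      rw [form_move_front ω hω_add hω_alt a Z (e j) (Rvec nab X (e j) (Z a))]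
      ring
    rw [hL, hR]
    -- the key pointwise (in a) identity
    have key : ∀ a : Fin (q + 1),
        ∑ j, (ω (Fin.cons (Rvec nab (Z a) (e j) X) (Fin.cons (e j) (Z ∘ a.succAbove)))
          + ω (Fin.cons (Rvec nab X (e j) (Z a)) (Fin.cons (e j) (Z ∘ a.succAbove)))) = 0 := by
      intro a
      have expand : ∀ (Q : Derivation ℝ A A) (j : Fin n),
          ω (Fin.cons Q (Fin.cons (e j) (Z ∘ a.succAbove)))
            = ∑ kk, g Q (e kk) * ω (Fin.cons (e kk) (Fin.cons (e j) (Z ∘ a.succAbove))) := by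
        intro Q j
        conv_lhs => rw [he_expand Q]
        rw [form_cons_sum ω hω_add _ Finset.univ _]
        exact Finset.sum_congr rfl fun kk _ => form_cons_smul ω hω_smul _ _ _
      have step : ∀ j : Fin n,
          ω (Fin.cons (Rvec nab (Z a) (e j) X) (Fin.cons (e j) (Z ∘ a.succAbove)))
            + ω (Fin.cons (Rvec nab X (e j) (Z a)) (Fin.cons (e j) (Z ∘ a.succAbove)))
          = ∑ kk, (g (Rvec nab (Z a) (e j) X) (e kk) + g (Rvec nab X (e j) (Z a)) (e kk))
              * ω (Fin.cons (e kk) (Fin.cons (e j) (Z ∘ a.succAbove))) := by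
        intro j
        rw [expand, expand, ← Finset.sum_add_distrib]
        exact Finset.sum_congr rfl fun kk _ => (add_mul _ _ _).symm
      have hskew : ∀ j kk : Fin n,
          (g (Rvec nab (Z a) (e j) X) (e kk) + g (Rvec nab X (e j) (Z a)) (e kk))
            * ω (Fin.cons (e kk) (Fin.cons (e j) (Z ∘ a.succAbove)))
          = -((g (Rvec nab (Z a) (e kk) X) (e j) + g (Rvec nab X (e kk) (Z a)) (e j))
            * ω (Fin.cons (e j) (Fin.cons (e kk) (Z ∘ a.succAbove)))) := by
        intro j kk
        have hsym1 : g (Rvec nab (Z a) (e j) X) (e kk)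
            = g (Rvec nab X (e kk) (Z a)) (e j) :=
          Rg_pair nab g hg_symm hg_add hnab_add₁ hnab_add₂ hnab_metric hnab_torsion _ _ _ _
        have hsym2 : g (Rvec nab X (e j) (Z a)) (e kk)
            = g (Rvec nab (Z a) (e kk) X) (e j) :=
          Rg_pair nab g hg_symm hg_add hnab_add₁ hnab_add₂ hnab_metric hnab_torsion _ _ _ _
        have hanti : ω (Fin.cons (e kk) (Fin.cons (e j) (Z ∘ a.succAbove)))
            = -ω (Fin.cons (e j) (Fin.cons (e kk) (Z ∘ a.succAbove))) :=
          form_swap01 ω hω_add hω_alt (e kk) (e j) _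
        rw [hsym1, hsym2, hanti]
        ring
      have hSS : (∑ j, ∑ kk, (g (Rvec nab (Z a) (e j) X) (e kk)
              + g (Rvec nab X (e j) (Z a)) (e kk))
              * ω (Fin.cons (e kk) (Fin.cons (e j) (Z ∘ a.succAbove))))
          + (∑ j, ∑ kk, (g (Rvec nab (Z a) (e j) X) (e kk)
              + g (Rvec nab X (e j) (Z a)) (e kk))
              * ω (Fin.cons (e kk) (Fin.cons (e j) (Z ∘ a.succAbove)))) = 0 := by
        have hcomm : (∑ j, ∑ kk, (g (Rvec nab (Z a) (e j) X) (e kk)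
                + g (Rvec nab X (e j) (Z a)) (e kk))
                * ω (Fin.cons (e kk) (Fin.cons (e j) (Z ∘ a.succAbove))))
            = ∑ j, ∑ kk, (g (Rvec nab (Z a) (e kk) X) (e j)
                + g (Rvec nab X (e kk) (Z a)) (e j))
                * ω (Fin.cons (e j) (Fin.cons (e kk) (Z ∘ a.succAbove))) := Finset.sum_comm
        nth_rewrite 2 [hcomm]
        rw [← Finset.sum_add_distrib]
        refine Finset.sum_eq_zero fun j _ => ?_
        rw [← Finset.sum_add_distrib]
        refine Finset.sum_eq_zero fun kk _ => ?_
        rw [hskew j kk]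
        ring
      calc ∑ j, (ω (Fin.cons (Rvec nab (Z a) (e j) X) (Fin.cons (e j) (Z ∘ a.succAbove)))
            + ω (Fin.cons (Rvec nab X (e j) (Z a)) (Fin.cons (e j) (Z ∘ a.succAbove))))
          = ∑ j, ∑ kk, (g (Rvec nab (Z a) (e j) X) (e kk)
              + g (Rvec nab X (e j) (Z a)) (e kk))
              * ω (Fin.cons (e kk) (Fin.cons (e j) (Z ∘ a.succAbove))) :=
            Finset.sum_congr rfl fun j _ => step j
        _ = 0 := half_cancel _ hSS
    -- conclude
    have final : (∑ j, ∑ a : Fin (q + 1), (-1 : A) ^ (a : ℕ)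
            * ω (Fin.cons (Rvec nab (Z a) (e j) X) (Fin.cons (e j) (Z ∘ a.succAbove))))
        + (∑ j, ∑ a : Fin (q + 1), (-1 : A) ^ (a : ℕ)
            * ω (Fin.cons (Rvec nab X (e j) (Z a)) (Fin.cons (e j) (Z ∘ a.succAbove)))) = 0 := by
      rw [← Finset.sum_add_distrib]
      have hrows : ∀ j : Fin n, (∑ a : Fin (q + 1), (-1 : A) ^ (a : ℕ)
              * ω (Fin.cons (Rvec nab (Z a) (e j) X) (Fin.cons (e j) (Z ∘ a.succAbove))))
            + (∑ a : Fin (q + 1), (-1 : A) ^ (a : ℕ)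
              * ω (Fin.cons (Rvec nab X (e j) (Z a)) (Fin.cons (e j) (Z ∘ a.succAbove))))
          = ∑ a : Fin (q + 1), (-1 : A) ^ (a : ℕ)
              * (ω (Fin.cons (Rvec nab (Z a) (e j) X) (Fin.cons (e j) (Z ∘ a.succAbove)))
                + ω (Fin.cons (Rvec nab X (e j) (Z a)) (Fin.cons (e j) (Z ∘ a.succAbove)))) := by
        intro j
        rw [← Finset.sum_add_distrib]
        exact Finset.sum_congr rfl fun a _ => by ring
      calc ∑ j, ((∑ a : Fin (q + 1), (-1 : A) ^ (a : ℕ)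
              * ω (Fin.cons (Rvec nab (Z a) (e j) X) (Fin.cons (e j) (Z ∘ a.succAbove))))
            + (∑ a : Fin (q + 1), (-1 : A) ^ (a : ℕ)
              * ω (Fin.cons (Rvec nab X (e j) (Z a)) (Fin.cons (e j) (Z ∘ a.succAbove)))))
          = ∑ j, ∑ a : Fin (q + 1), (-1 : A) ^ (a : ℕ)
              * (ω (Fin.cons (Rvec nab (Z a) (e j) X) (Fin.cons (e j) (Z ∘ a.succAbove)))
                + ω (Fin.cons (Rvec nab X (e j) (Z a)) (Fin.cons (e j) (Z ∘ a.succAbove)))) :=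
            Finset.sum_congr rfl fun j _ => hrows j
        _ = ∑ a : Fin (q + 1), ∑ j, (-1 : A) ^ (a : ℕ)
              * (ω (Fin.cons (Rvec nab (Z a) (e j) X) (Fin.cons (e j) (Z ∘ a.succAbove)))
                + ω (Fin.cons (Rvec nab X (e j) (Z a)) (Fin.cons (e j) (Z ∘ a.succAbove)))) :=
            Finset.sum_comm
        _ = 0 := by
            refine Finset.sum_eq_zero fun a _ => ?_
            rw [← Finset.mul_sum, key a, mul_zero]
    linear_combination -final

end RiemannModel
end
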